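/- arXiv:1708.00831 — 7 statements merged into one kernel-verified Lean document; each statement's English description precedes it below -/
import Mathlib

section
/- Let D₁ be the closed unit disk in ℂ and let Z ⊆ D₁ be a finite set with at most d points, d ≥ 1. Let 0 < δ < 1/(2d) and set δ' = δ/(10d). Then any two points v₁, v₂ ∈ D₁ \ Z^δ belong to the same connected component of D₁ \ Z^{δ'}. -/
open Real Set Metric MeasureTheory ENNReal

lemma stmt2_dist_ray (δ' : ℝ) (hδ' : 0 < δ') (v z : ℂ) (θ : ℝ)
    (hr : δ' < dist v z)
    (hsin : δ' / dist v z < |Real.sin (θ - Complex.arg (z - v))|) :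
    ∀ t : ℝ, δ' < dist (v + t • Complex.exp (θ * Complex.I)) z := by
  intro t
  have hp : z - v ≠ 0 := by
    intro h
    rw [sub_eq_zero.mp h] at hr
    simp at hr; linarith
  set r := ‖z - v‖ with hrdef
  have hdvz : dist v z = r := by
    rw [Complex.dist_eq, ← norm_neg, neg_sub]
  have hr0 : 0 < r := norm_pos_iff.mpr hp
  set φ := Complex.arg (z - v) with hφ
  have hp_re : (z - v).re = r * Real.cos φ := by
    rw [Complex.cos_arg hp]; field_simp; rfl
  have hp_im : (z - v).im = r * Real.sin φ := by
    rw [Complex.sin_arg]; field_simp; rfl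
  set u := Complex.exp (θ * Complex.I) with hu
  have hu_re : u.re = Real.cos θ := Complex.exp_ofReal_mul_I_re θ
  have hu_im : u.im = Real.sin θ := Complex.exp_ofReal_mul_I_im θ
  have e1 : (v + t • u - z).re = t * Real.cos θ - r * Real.cos φ := by
    simp [Complex.real_smul, Complex.add_re, Complex.sub_re, Complex.mul_re, hu_re, hu_im]
    linarith [hp_re, Complex.sub_re z v]
  have e2 : (v + t • u - z).im = t * Real.sin θ - r * Real.sin φ := by
    simp [Complex.real_smul, Complex.add_im, Complex.sub_im, Complex.mul_im, hu_re, hu_im]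
    linarith [hp_im, Complex.sub_im z v]
  have key : dist (v + t • u) z ^ 2 = t^2 - 2*t*r*Real.cos (θ - φ) + r^2 := by
    rw [Complex.dist_eq, Complex.sq_norm, Complex.normSq_apply, e1, e2, Real.cos_sub]
    linear_combination t^2 * (Real.sin_sq_add_cos_sq θ) + r^2 * (Real.sin_sq_add_cos_sq φ)
  rw [hdvz] at hsin hr
  have hsin' : δ' < r * |Real.sin (θ - φ)| := by
    rw [div_lt_iff₀ hr0] at hsin; linarith [hsin]
  have h2 : δ'^2 < r^2 * Real.sin (θ - φ)^2 := by
    nlinarith [sq_abs (Real.sin (θ - φ)), abs_nonneg (Real.sin (θ - φ)), hδ', hsin', hr0]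
  have h3 : δ'^2 < dist (v + t • u) z ^ 2 := by
    rw [key]
    nlinarith [sq_nonneg (t - r * Real.cos (θ - φ)), h2, Real.sin_sq_add_cos_sq (θ - φ)]
  nlinarith [dist_nonneg (x := v + t • u) (y := z), h3, hδ']


lemma stmt2_good_rho (d : ℕ) (hd : 1 ≤ d) (Z : Finset ℂ) (hZcard : Z.card ≤ d)
    (δ : ℝ) (hδ : 0 < δ) :
    ∃ ρ : ℝ, 1 - δ/2 < ρ ∧ ρ ≤ 1 ∧ ∀ z ∈ Z, δ / (10 * d) < |ρ - ‖z‖| := by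
  have hd1 : (1:ℝ) ≤ d := Nat.one_le_cast.mpr hd
  by_contra h
  push_neg at h
  have hsub : Set.Ioc (1 - δ/2) 1 ⊆
      ⋃ z ∈ Z, Set.Icc (‖z‖ - δ/(10*d)) (‖z‖ + δ/(10*d)) := by
    intro ρ hρ
    obtain ⟨z, hz, hzρ⟩ := h ρ hρ.1 hρ.2
    rw [abs_sub_le_iff] at hzρ
    exact Set.mem_biUnion hz ⟨by linarith [hzρ.1, hzρ.2], by linarith [hzρ.1, hzρ.2]⟩
  have hv := measure_mono (μ := volume) hsub
  rw [Real.volume_Ioc] at hv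
  have hv2 : volume (⋃ z ∈ Z, Set.Icc (‖z‖ - δ/(10*d)) (‖z‖ + δ/(10*d)))
      ≤ (d : ℝ≥0∞) * ENNReal.ofReal (2 * (δ/(10*d))) := by
    refine le_trans (measure_biUnion_finset_le _ _) ?_
    have heach : ∀ z ∈ Z, volume (Set.Icc (‖z‖ - δ/(10*d)) (‖z‖ + δ/(10*d)))
        = ENNReal.ofReal (2 * (δ/(10*d))) := by
      intro z _
      rw [Real.volume_Icc]
      congr 1
      ring
    rw [Finset.sum_congr rfl heach, Finset.sum_const, nsmul_eq_mul]
    exact mul_le_mul_left (by exact_mod_cast Nat.cast_le.mpr hZcard) _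
  have hfin : ENNReal.ofReal (1 - (1 - δ/2)) ≤ ENNReal.ofReal ((d:ℝ) * (2 * (δ/(10*d)))) := by
    rw [ENNReal.ofReal_mul (by positivity), ENNReal.ofReal_natCast]
    exact hv.trans hv2
  rw [ENNReal.ofReal_le_ofReal_iff (by positivity)] at hfin
  have hval : (d:ℝ) * (2 * (δ/(10*d))) = δ/5 := by
    field_simp
    ring
  rw [hval] at hfin
  linarith

lemma stmt2_good_theta (d : ℕ) (hd : 1 ≤ d) (Z : Finset ℂ) (hZcard : Z.card ≤ d) (φ : ℂ → ℝ) :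
    ∃ θ : ℝ, 0 ≤ θ ∧ θ < 2*π ∧
      ∀ z ∈ Z, ∀ k : ℤ, -1 ≤ k → k ≤ 3 → π/(20*d) < |θ - (φ z + k * π)| := by
  have hd1 : (1:ℝ) ≤ d := Nat.one_le_cast.mpr hd
  set b := π/(20*d) with hb
  by_contra h
  push_neg at h
  have hsub : Set.Ico 0 (2*π) ⊆
      ⋃ z ∈ Z, ⋃ k ∈ Finset.Icc (-1:ℤ) 3, Set.Icc (φ z + k*π - b) (φ z + k*π + b) := by
    intro θ hθ
    obtain ⟨z, hz, k, hk1, hk2, hkθ⟩ := h θ hθ.1 hθ.2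
    rw [abs_sub_le_iff] at hkθ
    refine Set.mem_biUnion hz (Set.mem_biUnion (Finset.mem_Icc.mpr ⟨hk1, hk2⟩) ?_)
    exact ⟨by linarith [hkθ.1, hkθ.2], by linarith [hkθ.1, hkθ.2]⟩
  have hv := measure_mono (μ := volume) hsub
  rw [Real.volume_Ico] at hv
  have hinner : ∀ z ∈ Z, volume (⋃ k ∈ Finset.Icc (-1:ℤ) 3, Set.Icc (φ z + k*π - b) (φ z + k*π + b))
      ≤ (5 : ℝ≥0∞) * ENNReal.ofReal (2*b) := by
    intro z _
    refine le_trans (measure_biUnion_finset_le _ _) ?_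
    have heach : ∀ k ∈ Finset.Icc (-1:ℤ) 3,
        volume (Set.Icc (φ z + k*π - b) (φ z + k*π + b)) = ENNReal.ofReal (2*b) := by
      intro k _
      rw [Real.volume_Icc]
      congr 1
      ring
    rw [Finset.sum_congr rfl heach, Finset.sum_const, nsmul_eq_mul]
    have hcard : (Finset.Icc (-1:ℤ) 3).card = 5 := by decide
    rw [hcard]
    norm_num
  have hv2 : volume (⋃ z ∈ Z, ⋃ k ∈ Finset.Icc (-1:ℤ) 3, Set.Icc (φ z + k*π - b) (φ z + k*π + b))
      ≤ (d : ℝ≥0∞) * ((5 : ℝ≥0∞) * ENNReal.ofReal (2*b)) := by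
    refine le_trans (measure_biUnion_finset_le _ _) ?_
    refine le_trans (Finset.sum_le_sum hinner) ?_
    rw [Finset.sum_const, nsmul_eq_mul]
    exact mul_le_mul_left (by exact_mod_cast Nat.cast_le.mpr hZcard) _
  have hfin : ENNReal.ofReal (2*π - 0) ≤ ENNReal.ofReal ((d:ℝ) * (5 * (2*b))) := by
    rw [ENNReal.ofReal_mul (by positivity), ENNReal.ofReal_mul (by norm_num : (0:ℝ) ≤ 5),
      ENNReal.ofReal_natCast, ENNReal.ofReal_ofNat]
    exact hv.trans hv2
  rw [ENNReal.ofReal_le_ofReal_iff (by positivity)] at hfin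
  have hval : (d:ℝ) * (5 * (2*b)) = π/2 := by
    rw [hb]
    field_simp
    ring
  rw [hval] at hfin
  have := pi_pos
  linarith


lemma stmt2_good_dir (d : ℕ) (hd : 1 ≤ d) (Z : Finset ℂ) (hZcard : Z.card ≤ d)
    (δ : ℝ) (hδ : 0 < δ) (v : ℂ) (hv : ∀ z ∈ Z, δ < dist v z) :
    ∃ u : ℂ, ‖u‖ = 1 ∧ ∀ z ∈ Z, ∀ t : ℝ, δ/(10*d) < dist (v + t • u) z := by
  have hd1 : (1:ℝ) ≤ d := Nat.one_le_cast.mpr hd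
  have hπ := Real.pi_pos
  obtain ⟨θ, hθ0, hθ2, hθ⟩ := stmt2_good_theta d hd Z hZcard (fun z => Complex.arg (z - v))
  refine ⟨Complex.exp (θ * Complex.I), Complex.norm_exp_ofReal_mul_I θ, ?_⟩
  intro z hz t
  have hδ' : 0 < δ/(10*d) := by positivity
  have hδ'δ : δ/(10*d) < δ := by
    rw [div_lt_iff₀ (by positivity)]
    nlinarith
  have hrz : δ/(10*d) < dist v z := lt_trans hδ'δ (hv z hz)
  refine stmt2_dist_ray _ hδ' v z θ hrz ?_ t
  set φ := Complex.arg (z - v) with hφdef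
  set y := θ - φ with hy
  by_contra hcon
  push_neg at hcon
  have hsb : |Real.sin y| ≤ 1/(10*d) := by
    refine le_trans hcon ?_
    have h1 : δ/(10*d) / dist v z ≤ δ/(10*d) / δ :=
      div_le_div_of_nonneg_left hδ'.le hδ (hv z hz).le
    have h2 : δ/(10*d) / δ = 1/(10*d) := by field_simp
    linarith
  set k := round (y / π) with hk
  have hky : |y - k * π| ≤ π/2 := by
    have h1 : |y/π - k| ≤ 1/2 := abs_sub_round (y/π)
    have h2 : |y - k*π| = |y/π - k| * π := by
      rw [show y - k*π = (y/π - k)*π by field_simp, abs_mul, abs_of_pos hπ]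
    rw [h2]; nlinarith
  have habs : |Real.sin (y - k*π)| = |Real.sin y| := by
    rw [Real.sin_sub_int_mul_pi, abs_mul]
    have : |((-1:ℝ)) ^ k| = 1 := by
      rcases Int.even_or_odd k with he | ho
      · rw [he.neg_one_zpow]; norm_num
      · rw [ho.neg_one_zpow]; norm_num
    rw [this, one_mul]
  have hky' := abs_le.mp hky
  have hsk : Real.sin |y - k*π| = |Real.sin y| := by
    rcases le_or_gt 0 (y - k*π) with hx | hx
    · rw [abs_of_nonneg hx, ← habs,
        abs_of_nonneg (Real.sin_nonneg_of_nonneg_of_le_pi hx (by linarith))]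
    · rw [abs_of_neg hx, Real.sin_neg, ← habs,
        abs_of_nonpos (Real.sin_nonpos_of_nonpos_of_neg_pi_le hx.le (by linarith))]
  have hlin : 2/π * |y - k*π| ≤ |Real.sin y| := by
    rw [← hsk]
    exact Real.mul_le_sin (abs_nonneg _) hky
  have hsmall : |y - k*π| ≤ π/(20*d) := by
    have h := mul_le_mul_of_nonneg_right (hlin.trans hsb) (by positivity : (0:ℝ) ≤ π/2)
    have e1 : 2/π * |y - k*π| * (π/2) = |y - k*π| := by field_simp
    have e2 : 1/(10*(d:ℝ)) * (π/2) = π/(20*d) := by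
      rw [div_mul_div_comm, one_mul]
      congr 1
      ring
    rw [e1, e2] at h
    exact h
  have hφ1 : -π < φ := Complex.neg_pi_lt_arg _
  have hφ2 : φ ≤ π := Complex.arg_le_pi _
  have hy1 : -π ≤ y := by rw [hy]; linarith
  have hy2 : y < 3*π := by rw [hy]; linarith
  have hk1 : (-1:ℤ) ≤ k := by
    have hr : (-2:ℝ) < (k:ℝ) := by nlinarith [hky'.2]
    have : (-2:ℤ) < k := by exact_mod_cast hr
    omega
  have hk2 : k ≤ 3 := by
    have hr : (k:ℝ) < 4 := by nlinarith [hky'.1]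
    have : k < 4 := by exact_mod_cast hr
    omega
  have hcontra := hθ z hz k hk1 hk2
  rw [show θ - (φ + (k:ℝ)*π) = y - k*π by rw [hy]; ring] at hcontra
  linarith


lemma stmt2_connect (d : ℕ) (hd : 1 ≤ d) (Z : Finset ℂ) (hZcard : Z.card ≤ d)
    (δ : ℝ) (hδ : 0 < δ) (hδ2 : δ < 1/(2*d))
    (ρ : ℝ) (hρ1 : 1 - δ/2 < ρ) (hρ2 : ρ ≤ 1)
    (v : ℂ) (hv1 : ‖v‖ ≤ 1) (hv2 : ∀ z ∈ Z, δ < dist v z) :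
    ∃ T : Set ℂ, IsPreconnected T ∧ v ∈ T ∧ (∃ w ∈ T, ‖w‖ = ρ) ∧
      T ⊆ Metric.closedBall (0:ℂ) 1 \ ⋃ z ∈ Z, Metric.closedBall z (δ/(10*d)) := by
  have hd1 : (1:ℝ) ≤ d := Nat.one_le_cast.mpr hd
  have hδhalf : δ < 1/2 := by
    refine lt_of_lt_of_le hδ2 ?_
    rw [div_le_div_iff₀ (by positivity) (by norm_num)]
    nlinarith
  have hρ0 : (0:ℝ) < ρ := by linarith
  have hδ'δ2 : δ/(10*d) < δ/2 := by
    rw [div_lt_div_iff₀ (by positivity) (by norm_num)]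
    nlinarith
  rcases le_or_gt ‖v‖ ρ with hcase | hcase
  · -- v inside the circle: go straight out in a good direction
    obtain ⟨u, hu1, hu⟩ := stmt2_good_dir d hd Z hZcard δ hδ v hv2
    have hun : ‖u‖ = 1 := hu1
    have hcont : Continuous (fun t : ℝ => v + t • u) :=
      continuous_const.add (continuous_id.smul continuous_const)
    have hf : ContinuousOn (fun t : ℝ => ‖v + t • u‖) (Set.Icc 0 2) :=
      (continuous_norm.comp hcont).continuousOn
    have hf2 : ρ ≤ ‖v + (2:ℝ) • u‖ := by
      have h1 : ‖(2:ℝ) • u‖ ≤ ‖v + (2:ℝ) • u‖ + ‖v‖ := by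
        calc ‖(2:ℝ) • u‖ = ‖(v + (2:ℝ) • u) - v‖ := by congr 1; ring
        _ ≤ ‖v + (2:ℝ) • u‖ + ‖v‖ := norm_sub_le _ _
      have h2 : ‖(2:ℝ) • u‖ = 2 := by rw [norm_smul, hun]; norm_num
      linarith
    obtain ⟨τ, hτmem, hτ⟩ := intermediate_value_Icc (by norm_num : (0:ℝ) ≤ 2) hf
      (⟨by simpa using hcase, hf2⟩ : ρ ∈ Set.Icc ‖v + (0:ℝ) • u‖ ‖v + (2:ℝ) • u‖)
    beta_reduce at hτ
    refine ⟨(fun t : ℝ => v + t • u) '' Set.Icc 0 τ, ?_, ?_, ?_, ?_⟩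
    · exact isPreconnected_Icc.image _ hcont.continuousOn
    · exact ⟨0, ⟨le_refl 0, hτmem.1⟩, by simp⟩
    · exact ⟨v + τ • u, ⟨τ, ⟨hτmem.1, le_refl τ⟩, rfl⟩, hτ⟩
    · rintro x ⟨t, ⟨ht0, htτ⟩, rfl⟩
      beta_reduce
      constructor
      · rw [Metric.mem_closedBall, dist_zero_right]
        rcases eq_or_ne τ 0 with h0 | h0
        · have : t = 0 := le_antisymm (h0 ▸ htτ) ht0
          rw [this]
          simpa using hv1
        · have hτpos : 0 < τ := lt_of_le_of_ne hτmem.1 (Ne.symm h0)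
          set a := t / τ with ha
          have ha0 : 0 ≤ a := div_nonneg ht0 hτpos.le
          have ha1 : a ≤ 1 := (div_le_one hτpos).mpr htτ
          have hat : a * τ = t := div_mul_cancel₀ t h0
          have hxeq : v + t • u = (1-a) • v + a • (v + τ • u) := by
            rw [smul_add, ← add_assoc, ← add_smul, smul_smul, hat]
            norm_num
          rw [hxeq]
          calc ‖(1-a) • v + a • (v + τ • u)‖ ≤ ‖(1-a) • v‖ + ‖a • (v + τ • u)‖ :=
                norm_add_le _ _
          _ = (1-a) * ‖v‖ + a * ‖v + τ • u‖ := by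
                rw [norm_smul, norm_smul, Real.norm_of_nonneg (by linarith),
                  Real.norm_of_nonneg ha0]
          _ ≤ (1-a) * 1 + a * 1 := by
                have hw1 : ‖v + τ • u‖ ≤ 1 := le_trans (le_of_eq hτ) hρ2
                gcongr <;> linarith
          _ = 1 := by ring
      · intro hmem
        rw [Set.mem_iUnion₂] at hmem
        obtain ⟨z, hz, hball⟩ := hmem
        rw [Metric.mem_closedBall] at hball
        exact absurd hball (not_le.mpr (hu z hz t))
  · -- v outside the circle: go radially inward (short segment)
    have hav : 0 < ‖v‖ := lt_trans hρ0 hcase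
    have havne : ‖v‖ ≠ 0 := ne_of_gt hav
    have hcont : Continuous (fun t : ℝ => (t / ‖v‖) • v) :=
      (continuous_id.div_const _).smul continuous_const
    refine ⟨(fun t : ℝ => (t / ‖v‖) • v) '' Set.Icc ρ ‖v‖, ?_, ?_, ?_, ?_⟩
    · exact isPreconnected_Icc.image _ hcont.continuousOn
    · exact ⟨‖v‖, ⟨hcase.le, le_refl _⟩, by
        show (‖v‖ / ‖v‖) • v = v
        rw [div_self havne, one_smul]⟩
    · refine ⟨(ρ / ‖v‖) • v, ⟨ρ, ⟨le_refl _, hcase.le⟩, rfl⟩, ?_⟩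
      rw [norm_smul, Real.norm_of_nonneg (by positivity), div_mul_cancel₀ _ havne]
    · rintro x ⟨t, ⟨htρ, htav⟩, rfl⟩
      beta_reduce
      have ht0 : 0 < t := lt_of_lt_of_le hρ0 htρ
      have hxnorm : ‖(t / ‖v‖) • v‖ = t := by
        rw [norm_smul, Real.norm_of_nonneg (by positivity), div_mul_cancel₀ _ havne]
      constructor
      · rw [Metric.mem_closedBall, dist_zero_right, hxnorm]
        linarith
      · have hdxv : dist ((t / ‖v‖) • v) v = ‖v‖ - t := by
          rw [dist_eq_norm]
          have : (t / ‖v‖) • v - v = (t / ‖v‖ - 1) • v := by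
            rw [sub_smul, one_smul]
          rw [this, norm_smul, Real.norm_eq_abs,
            abs_of_nonpos (by rw [sub_nonpos, div_le_one hav]; exact htav), neg_sub,
            sub_mul, one_mul, div_mul_cancel₀ _ havne]
        intro hmem
        rw [Set.mem_iUnion₂] at hmem
        obtain ⟨z, hz, hball⟩ := hmem
        rw [Metric.mem_closedBall] at hball
        have htri := dist_triangle v ((t / ‖v‖) • v) z
        rw [dist_comm v ((t / ‖v‖) • v), hdxv] at htri
        have hvz := hv2 z hz
        have h1 : ‖v‖ - t ≤ 1 - ρ := by linarith [hv1]
        have h2 : (1:ℝ) - ρ < δ/2 := by linarith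
        linarith


theorem stmt2 (d : ℕ) (hd : 1 ≤ d) (Z : Finset ℂ) (hZcard : Z.card ≤ d)
    (hZ : (Z : Set ℂ) ⊆ Metric.closedBall (0 : ℂ) 1)
    (δ : ℝ) (hδ : 0 < δ) (hδ' : δ < 1 / (2 * d))
    (v₁ v₂ : ℂ)
    (hv₁ : v₁ ∈ Metric.closedBall (0 : ℂ) 1 \ ⋃ z ∈ Z, Metric.closedBall z δ)
    (hv₂ : v₂ ∈ Metric.closedBall (0 : ℂ) 1 \ ⋃ z ∈ Z, Metric.closedBall z δ) :
    v₂ ∈ connectedComponentIn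
        (Metric.closedBall (0 : ℂ) 1 \ ⋃ z ∈ Z, Metric.closedBall z (δ / (10 * d))) v₁ := by
  have hd1 : (1:ℝ) ≤ d := Nat.one_le_cast.mpr hd
  have hball : ∀ v : ℂ, v ∈ Metric.closedBall (0 : ℂ) 1 \ ⋃ z ∈ Z, Metric.closedBall z δ →
      ‖v‖ ≤ 1 ∧ ∀ z ∈ Z, δ < dist v z := by
    intro v hv
    refine ⟨by simpa [dist_zero_right] using hv.1, ?_⟩
    intro z hz
    by_contra hc
    push_neg at hc
    exact hv.2 (Set.mem_iUnion₂.mpr ⟨z, hz, Metric.mem_closedBall.mpr hc⟩)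
  obtain ⟨h11, h12⟩ := hball v₁ hv₁
  obtain ⟨h21, h22⟩ := hball v₂ hv₂
  obtain ⟨ρ, hρ1, hρ2, hρZ⟩ := stmt2_good_rho d hd Z hZcard δ hδ
  have hρ0 : (0:ℝ) < ρ := by
    have hδhalf : δ < 1/2 := by
      refine lt_of_lt_of_le hδ' ?_
      rw [div_le_div_iff₀ (by positivity) (by norm_num)]
      nlinarith
    linarith
  obtain ⟨T₁, hT₁pre, hvT₁, ⟨w₁, hw₁T, hw₁ρ⟩, hT₁sub⟩ :=
    stmt2_connect d hd Z hZcard δ hδ hδ' ρ hρ1 hρ2 v₁ h11 h12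
  obtain ⟨T₂, hT₂pre, hvT₂, ⟨w₂, hw₂T, hw₂ρ⟩, hT₂sub⟩ :=
    stmt2_connect d hd Z hZcard δ hδ hδ' ρ hρ1 hρ2 v₂ h21 h22
  have hsph_sub : Metric.sphere (0:ℂ) ρ ⊆
      Metric.closedBall (0 : ℂ) 1 \ ⋃ z ∈ Z, Metric.closedBall z (δ / (10 * d)) := by
    intro w hw
    have hwρ : ‖w‖ = ρ := by simpa [dist_zero_right] using hw
    constructor
    · rw [Metric.mem_closedBall, dist_zero_right, hwρ]; exact hρ2
    · intro hmem
      rw [Set.mem_iUnion₂] at hmem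
      obtain ⟨z, hz, hb⟩ := hmem
      rw [Metric.mem_closedBall] at hb
      have h1 : |ρ - ‖z‖| ≤ dist w z := by
        rw [Complex.dist_eq]
        calc |ρ - ‖z‖| = |‖w‖ - ‖z‖| := by rw [hwρ]
        _ ≤ ‖w - z‖ := abs_norm_sub_norm_le w z
        _ = ‖w - z‖ := rfl
      linarith [hρZ z hz]
  have hsph_pre : IsPreconnected (Metric.sphere (0:ℂ) ρ) := by
    have hrank : 1 < Module.rank ℝ ℂ := by
      rw [Complex.rank_real_complex]
      exact (by norm_num : (1:Cardinal) < 2)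
    exact (isConnected_sphere hrank 0 hρ0.le).isPreconnected
  have hw₁s : w₁ ∈ Metric.sphere (0:ℂ) ρ := by
    rw [Metric.mem_sphere, dist_zero_right]; exact hw₁ρ
  have hw₂s : w₂ ∈ Metric.sphere (0:ℂ) ρ := by
    rw [Metric.mem_sphere, dist_zero_right]; exact hw₂ρ
  have hpre2 : IsPreconnected (Metric.sphere (0:ℂ) ρ ∪ T₂) :=
    IsPreconnected.union w₂ hw₂s hw₂T hsph_pre hT₂pre
  have hpreT : IsPreconnected (T₁ ∪ (Metric.sphere (0:ℂ) ρ ∪ T₂)) :=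
    IsPreconnected.union w₁ hw₁T (Or.inl hw₁s) hT₁pre hpre2
  have hTsub : T₁ ∪ (Metric.sphere (0:ℂ) ρ ∪ T₂) ⊆
      Metric.closedBall (0 : ℂ) 1 \ ⋃ z ∈ Z, Metric.closedBall z (δ / (10 * d)) :=
    Set.union_subset hT₁sub (Set.union_subset hsph_sub hT₂sub)
  exact hpreT.subset_connectedComponentIn (Or.inl hvT₁) hTsub (Or.inr (Or.inr hvT₂))
end

section
/- Let z₁,…,z_d be d points in ℂ (d ≥ 1) and let r > 0. Then every connected component of the union of the closed disks of radius r centered at z₁,…,z_d has diameter at most 2·d·r. -/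
theorem stmt3 (d : ℕ) (hd : 1 ≤ d) (z : Fin d → ℂ) (r : ℝ) (hr : 0 < r)
    (x : ℂ) (hx : x ∈ ⋃ s, Metric.closedBall (z s) r) :
    Metric.diam (connectedComponentIn (⋃ s, Metric.closedBall (z s) r) x) ≤ 2 * d * r := by
  classical
  set F := ⋃ s, Metric.closedBall (z s) r with hF
  apply Metric.diam_le_of_forall_dist_le (by positivity)
  intro a ha b hb
  have haF : a ∈ F := connectedComponentIn_subset F x ha
  have hbF : b ∈ F := connectedComponentIn_subset F x hb
  obtain ⟨s0, hs0⟩ : ∃ s, a ∈ Metric.closedBall (z s) r := by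
    simpa [hF] using haF
  -- chain-reachable sets
  let step : Finset (Fin d) → Finset (Fin d) := fun T =>
    T ∪ Finset.univ.filter (fun t => ∃ s ∈ T, dist (z s) (z t) ≤ 2 * r)
  have step_sub : ∀ T, T ⊆ step T := fun T => Finset.subset_union_left
  let S : ℕ → Finset (Fin d) := fun n => step^[n] {s0}
  have hSsucc : ∀ n, S (n + 1) = step (S n) := by
    intro n
    simp only [S, Function.iterate_succ_apply']
  -- distance bound along chains
  have hbound : ∀ n, ∀ t ∈ S n, dist (z s0) (z t) ≤ 2 * r * n := by
    intro n
    induction n with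
    | zero =>
      intro t ht
      simp only [S, Function.iterate_zero_apply, Finset.mem_singleton] at ht
      simp [ht]
    | succ n ih =>
      intro t ht
      rw [hSsucc] at ht
      rcases Finset.mem_union.1 ht with h | h
      · have := ih t h
        have : (n : ℝ) ≤ (n + 1 : ℕ) := by push_cast; linarith
        nlinarith [ih t h]
      · obtain ⟨s, hs, hdist⟩ := (Finset.mem_filter.1 h).2
        have h1 := ih s hs
        calc dist (z s0) (z t) ≤ dist (z s0) (z s) + dist (z s) (z t) := dist_triangle _ _ _
          _ ≤ 2 * r * n + 2 * r := by linarith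
          _ = 2 * r * (n + 1 : ℕ) := by push_cast; ring
  -- stability at step d - 1
  have hkey : ∀ n, n + 1 ≤ (S n).card ∨ step (S n) = S n := by
    intro n
    induction n with
    | zero => left; simp [S]
    | succ n ih =>
      rcases ih with h | h
      · by_cases hst : step (S n) = S n
        · right; simp only [hSsucc, hst]
        · left
          have hss : S n ⊂ step (S n) := ⟨step_sub _, fun hsub => hst (Finset.Subset.antisymm hsub (step_sub _))⟩
          have := Finset.card_lt_card hss
          rw [hSsucc]
          omega
      · right
        simp only [hSsucc, h]
  have hstable : step (S (d - 1)) = S (d - 1) := by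
    rcases hkey (d - 1) with h | h
    · have hcard : (S (d - 1)).card = d := le_antisymm (by simpa using Finset.card_le_univ (S (d-1))) (by omega)
      have huniv : S (d - 1) = Finset.univ := Finset.eq_univ_of_card _ (by simpa using hcard)
      apply Finset.Subset.antisymm _ (step_sub _)
      rw [huniv]
      intro t _
      exact Finset.mem_univ t
    · exact h
  set T := S (d - 1) with hT
  have hclosedT : ∀ s ∈ T, ∀ t : Fin d, dist (z s) (z t) ≤ 2 * r → t ∈ T := by
    intro s hs t hdist
    have : t ∈ step T := Finset.mem_union_right _ (Finset.mem_filter.2 ⟨Finset.mem_univ _, s, hs, hdist⟩)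
    rwa [hstable] at this
  have hs0T : s0 ∈ T := by
    have hmono : ∀ n, S n ⊆ S (n + 1) := fun n => by rw [hSsucc]; exact step_sub _
    have : ∀ n, S 0 ⊆ S n := by
      intro n; induction n with
      | zero => exact Finset.Subset.refl _
      | succ n ih => exact ih.trans (hmono n)
    exact this (d - 1) (by simp [S])
  -- the two closed pieces
  set F₁ : Set ℂ := ⋃ t ∈ T, Metric.closedBall (z t) r with hF₁
  set F₂ : Set ℂ := ⋃ t ∈ Tᶜ, Metric.closedBall (z t) r with hF₂
  have hcF₁ : IsClosed F₁ := isClosed_biUnion_finset fun t _ => Metric.isClosed_closedBall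
  have hcF₂ : IsClosed F₂ := isClosed_biUnion_finset fun t _ => Metric.isClosed_closedBall
  have hdisj : Disjoint F₁ F₂ := by
    rw [Set.disjoint_left]
    rintro w hw1 hw2
    simp only [hF₁, hF₂, Set.mem_iUnion, Metric.mem_closedBall] at hw1 hw2
    obtain ⟨t, ht, hwt⟩ := hw1
    obtain ⟨t', ht', hwt'⟩ := hw2
    have : dist (z t) (z t') ≤ 2 * r := by
      calc dist (z t) (z t') ≤ dist (z t) w + dist w (z t') := dist_triangle _ _ _
        _ ≤ r + r := by rw [dist_comm (z t) w]; linarith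
        _ = 2 * r := by ring
    exact (Finset.mem_compl.1 ht') (hclosedT t ht t' this)
  obtain ⟨U, V, hU, hV, hF1U, hF2V, hUV⟩ :=
    NormalSpace.normal F₁ F₂ hcF₁ hcF₂ hdisj
  have hFsplit : F ⊆ F₁ ∪ F₂ := by
    intro w hw
    simp only [hF, Set.mem_iUnion] at hw
    obtain ⟨s, hs⟩ := hw
    by_cases h : s ∈ T
    · exact Or.inl (Set.mem_biUnion h hs)
    · exact Or.inr (Set.mem_biUnion (Finset.mem_compl.2 h) hs)
  have hCsub : connectedComponentIn F x ⊆ U := by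
    apply isPreconnected_connectedComponentIn.subset_left_of_subset_union hU hV hUV
    · exact fun w hw => (hFsplit (connectedComponentIn_subset F x hw)).imp (fun h => hF1U h) (fun h => hF2V h)
    · exact ⟨a, ha, hF1U (Set.mem_biUnion hs0T hs0)⟩
  have hbF₁ : b ∈ F₁ := by
    rcases hFsplit hbF with h | h
    · exact h
    · exact absurd (hCsub hb) (Set.disjoint_left.1 hUV.symm (hF2V h))
  simp only [hF₁, Set.mem_iUnion, Metric.mem_closedBall] at hbF₁
  obtain ⟨t, htT, hbt⟩ := hbF₁
  have hzd : dist (z s0) (z t) ≤ 2 * r * (d - 1 : ℕ) := hbound (d - 1) t htT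
  have has0 : dist a (z s0) ≤ r := Metric.mem_closedBall.1 hs0
  have hcast : ((d - 1 : ℕ) : ℝ) = (d : ℝ) - 1 := by
    have := hd; push_cast [Nat.cast_sub hd]; ring
  calc dist a b ≤ dist a (z s0) + dist (z s0) b := dist_triangle _ _ _
    _ ≤ dist a (z s0) + (dist (z s0) (z t) + dist (z t) b) := by
        linarith [dist_triangle (z s0) (z t) b]
    _ ≤ r + (2 * r * (d - 1 : ℕ) + r) := by
        rw [dist_comm (z t) b]; linarith
    _ = 2 * d * r := by rw [hcast]; ring
end

section
/- Let n ≥ 1, d ≥ 1. There exists a constant c₃ > 0 depending only on n and d such that: for every normalized polynomial P of degree d in ℂⁿ, every point v₁ ∈ Q, and every closed ball B ⊆ Q of radius ρ(n,d) = 1/(4(16(d+n))^n), there exists a point z₁ ∈ B with z₁ ≠ v₁ such that ‖P_L‖ ≥ c₃, where P_L is the univariate polynomial t ↦ P(v₁ + t·(z₁ − v₁)/‖z₁ − v₁‖) obtained by restricting P to the complex line L through v₁ and z₁. -/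
noncomputable section

def unitCube (n : ℕ) : Set (EuclideanSpace ℂ (Fin n)) :=
  {z | ∀ i, (z i).re ∈ Set.Icc (0:ℝ) 1 ∧ (z i).im ∈ Set.Icc (0:ℝ) 1}

def mvNorm {n : ℕ} (P : MvPolynomial (Fin n) ℂ) : ℝ :=
  ∑ α ∈ P.support, ‖P.coeff α‖

def zeroSet {n : ℕ} (P : MvPolynomial (Fin n) ℂ) : Set (EuclideanSpace ℂ (Fin n)) :=
  {z | MvPolynomial.eval (fun i => z i) P = 0}

def Qr (n : ℕ) (H : Set (EuclideanSpace ℂ (Fin n))) (r : ℝ) : Set (EuclideanSpace ℂ (Fin n)) :=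
  unitCube n \ {z | Metric.infDist z H ≤ r}

def polyNorm (p : Polynomial ℂ) : ℝ := ∑ k ∈ p.support, ‖p.coeff k‖

def lineRestrict {n : ℕ} (P : MvPolynomial (Fin n) ℂ) (b w : EuclideanSpace ℂ (Fin n)) :
    Polynomial ℂ :=
  MvPolynomial.aeval (fun i => Polynomial.C (b i) + Polynomial.C (w i) * Polynomial.X) P

def lineSet {n : ℕ} (b w : EuclideanSpace ℂ (Fin n)) : Set (EuclideanSpace ℂ (Fin n)) :=
  {z | ∃ t : ℂ, z = b + t • w}

/-! ### Auxiliary lemmas -/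

set_option maxHeartbeats 1000000

open MvPolynomial in
lemma gridVanish : ∀ (n : ℕ) (P : MvPolynomial (Fin n) ℂ) (T : Fin n → Finset ℂ),
    (∀ i, P.degreeOf i < (T i).card) →
    (∀ z : Fin n → ℂ, (∀ i, z i ∈ T i) → MvPolynomial.eval z P = 0) → P = 0 := by
  intro n
  induction n with
  | zero =>
    intro P T hT hz
    have h0 := hz Fin.elim0 (fun i => i.elim0)
    rw [MvPolynomial.eq_C_of_isEmpty P] at h0 ⊢
    simp at h0
    simp [h0]
  | succ n ih =>
    intro P T hT hz
    have key : ∀ i : ℕ, (finSuccEquiv ℂ n P).coeff i = 0 := by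
      intro i
      apply ih _ (fun j => T j.succ) (fun j =>
        lt_of_le_of_lt (degreeOf_coeff_finSuccEquiv P j i) (hT j.succ))
      intro y hy
      have hq : Polynomial.map (eval y) (finSuccEquiv ℂ n P) = 0 := by
        apply Polynomial.eq_zero_of_natDegree_lt_card_of_eval_eq_zero' _ (T 0)
        · intro a ha
          rw [← eval_eq_eval_mv_eval']
          apply hz
          intro j
          refine Fin.cases ?_ ?_ j
          · simpa using ha
          · intro j; simpa using hy j
        · exact lt_of_le_of_lt ((Polynomial.natDegree_map_le).trans
            (natDegree_finSuccEquiv P).le) (hT 0)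
      have := congrArg (fun p => Polynomial.coeff p i) hq
      simpa using this
    have : finSuccEquiv ℂ n P = 0 := Polynomial.ext fun i => by simp [key i]
    exact (map_eq_zero_iff _ (finSuccEquiv ℂ n).injective).mp this

def coefIdx (n d : ℕ) : Finset (Fin n →₀ ℕ) :=
  Finset.Iic (Finsupp.equivFunOnFinite.symm (fun _ => d))

lemma mem_coefIdx {n d : ℕ} (α : Fin n →₀ ℕ) : α ∈ coefIdx n d ↔ ∀ i, α i ≤ d := by
  simp [coefIdx, Finsupp.le_def]

def toPoly {n d : ℕ} (c : coefIdx n d → ℂ) : MvPolynomial (Fin n) ℂ :=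
  ∑ α : coefIdx n d, MvPolynomial.monomial (α : Fin n →₀ ℕ) (c α)

lemma coeff_toPoly {n d : ℕ} (c : coefIdx n d → ℂ) (β : coefIdx n d) :
    (toPoly c).coeff (β : Fin n →₀ ℕ) = c β := by
  rw [toPoly, MvPolynomial.coeff_sum]
  rw [Finset.sum_eq_single β]
  · simp
  · intro α _ hne
    rw [MvPolynomial.coeff_monomial, if_neg (fun h => hne (Subtype.ext h))]
  · simp

lemma eval_toPoly {n d : ℕ} (c : coefIdx n d → ℂ) (z : Fin n → ℂ) :
    MvPolynomial.eval z (toPoly c) = ∑ α : coefIdx n d, c α * ∏ i, z i ^ (α : Fin n →₀ ℕ) i := by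
  rw [toPoly, map_sum]
  refine Finset.sum_congr rfl fun α _ => ?_
  rw [MvPolynomial.eval_monomial, Finsupp.prod_pow]

lemma degreeOf_toPoly {n d : ℕ} (c : coefIdx n d → ℂ) (i : Fin n) :
    (toPoly c).degreeOf i ≤ d := by
  rw [MvPolynomial.degreeOf_eq_sup, Finset.sup_le_iff]
  intro β hβ
  have : β ∈ coefIdx n d := by
    by_contra hβ'
    have : (toPoly c).coeff β = 0 := by
      rw [toPoly, MvPolynomial.coeff_sum]
      refine Finset.sum_eq_zero fun α _ => ?_
      rw [MvPolynomial.coeff_monomial, if_neg (fun h => hβ' (by rw [← h]; exact α.2))]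
    exact (MvPolynomial.mem_support_iff.mp hβ) this
  exact (mem_coefIdx β).mp this i

lemma toPoly_coeffs {n d : ℕ} (P : MvPolynomial (Fin n) ℂ) (hP : P.totalDegree ≤ d) :
    toPoly (fun α : coefIdx n d => P.coeff α) = P := by
  have hsub : P.support ⊆ coefIdx n d := by
    intro α hα
    rw [mem_coefIdx]
    intro i
    calc α i ≤ α.sum fun _ e => e := by
          by_cases h : α i = 0
          · simp [h]
          · exact Finset.single_le_sum (fun _ _ => Nat.zero_le _)
              (Finsupp.mem_support_iff.mpr h)
      _ ≤ P.totalDegree := MvPolynomial.le_totalDegree hα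
      _ ≤ d := hP
  conv_rhs => rw [(MvPolynomial.support_sum_monomial_coeff P).symm]
  rw [toPoly, Finset.sum_coe_sort (coefIdx n d) (fun α => MvPolynomial.monomial α (P.coeff α))]
  exact (Finset.sum_subset hsub (fun α _ hα => by
    rw [MvPolynomial.notMem_support_iff.mp hα, map_zero])).symm

lemma mvNorm_eq_sum {n d : ℕ} (P : MvPolynomial (Fin n) ℂ) (hP : P.totalDegree ≤ d) :
    mvNorm P = ∑ α : coefIdx n d, ‖P.coeff α‖ := by
  rw [mvNorm, Finset.sum_coe_sort (coefIdx n d) (fun α => ‖P.coeff α‖)]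
  apply Finset.sum_subset
  · intro α hα
    rw [mem_coefIdx]
    intro i
    calc α i ≤ α.sum fun _ e => e := by
          by_cases h : α i = 0
          · simp [h]
          · exact Finset.single_le_sum (fun _ _ => Nat.zero_le _)
              (Finsupp.mem_support_iff.mpr h)
      _ ≤ P.totalDegree := MvPolynomial.le_totalDegree hα
      _ ≤ d := hP
  · intro α _ hα
    rw [MvPolynomial.notMem_support_iff.mp hα, norm_zero]

def gridPt {n : ℕ} (d : ℕ) (s : ℝ) (x : EuclideanSpace ℂ (Fin n)) (f : Fin n → Fin (d+1)) :
    Fin n → ℂ := fun i => x i + ((s * (f i : ℕ) : ℝ) : ℂ)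

lemma uniformLB (n d : ℕ) (s : ℝ) (hs : 0 < s) (R : ℝ) (hR : 0 ≤ R) :
    ∃ c₀ : ℝ, 0 < c₀ ∧ ∀ c : coefIdx n d → ℂ, (∑ α : coefIdx n d, ‖c α‖) = 1 →
      ∀ x : EuclideanSpace ℂ (Fin n), ‖x‖ ≤ R →
        c₀ ≤ ∑ f : Fin n → Fin (d+1),
          ‖MvPolynomial.eval (gridPt d s x f) (toPoly c)‖ := by
  classical
  set F : ((coefIdx n d → ℂ) × EuclideanSpace ℂ (Fin n)) → ℝ := fun p =>
    ∑ f : Fin n → Fin (d+1), ‖MvPolynomial.eval (gridPt d s p.2 f) (toPoly p.1)‖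
    with hF
  have hcont : Continuous F := by
    apply continuous_finset_sum
    intro f _
    apply continuous_norm.comp
    have : ∀ p : ((coefIdx n d → ℂ) × EuclideanSpace ℂ (Fin n)),
        MvPolynomial.eval (gridPt d s p.2 f) (toPoly p.1) =
        ∑ α : coefIdx n d, p.1 α * ∏ i, (p.2 i + ((s * (f i : ℕ) : ℝ) : ℂ)) ^ (α : Fin n →₀ ℕ) i := by
      intro p; rw [eval_toPoly]; rfl
    simp only [this]
    apply continuous_finset_sum
    intro α _
    apply Continuous.mul ((continuous_apply (α : coefIdx n d)).comp continuous_fst)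
    apply continuous_finset_prod
    intro i _
    exact ((((PiLp.continuous_apply 2 _ i).comp continuous_snd).add continuous_const).pow _)
  set K : Set (coefIdx n d → ℂ) := {c | (∑ α : coefIdx n d, ‖c α‖) = 1} with hK
  have hKc : IsCompact K := by
    apply Metric.isCompact_of_isClosed_isBounded
    · exact isClosed_eq (continuous_finset_sum _ fun α _ =>
        continuous_norm.comp (continuous_apply α)) continuous_const
    · apply Bornology.IsBounded.subset (Metric.isBounded_closedBall (x := (0 : coefIdx n d → ℂ)) (r := 1))
      intro c hc
      rw [Metric.mem_closedBall, dist_zero_right]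
      rcases isEmpty_or_nonempty (coefIdx n d) with h | h
      · simp [pi_norm_le_iff_of_nonneg]
      rw [pi_norm_le_iff_of_nonneg (by norm_num)]
      intro α
      calc ‖c α‖ = ‖c α‖ := rfl
        _ ≤ ∑ β : coefIdx n d, ‖c β‖ :=
            Finset.single_le_sum (f := fun β : coefIdx n d => ‖c β‖) (fun _ _ => norm_nonneg _) (Finset.mem_univ α)
        _ = 1 := hc
  have hBc : IsCompact (Metric.closedBall (0 : EuclideanSpace ℂ (Fin n)) R) :=
    isCompact_closedBall _ _
  have h0A : (0 : Fin n →₀ ℕ) ∈ coefIdx n d := by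
    simp [coefIdx, Finsupp.le_def]
  set c₀' : coefIdx n d → ℂ := fun α => if (α : Fin n →₀ ℕ) = 0 then 1 else 0 with hc₀'
  have hc₀K : c₀' ∈ K := by
    rw [hK, Set.mem_setOf_eq, Finset.sum_eq_single (⟨0, h0A⟩ : coefIdx n d)]
    · simp [hc₀']
    · intro α _ hne
      have : (α : Fin n →₀ ℕ) ≠ 0 := by
        intro h; exact hne (Subtype.ext h)
      simp [hc₀', this]
    · simp
  have hne : (K ×ˢ Metric.closedBall (0 : EuclideanSpace ℂ (Fin n)) R).Nonempty :=
    ⟨(c₀', 0), hc₀K, Metric.mem_closedBall_self hR⟩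
  obtain ⟨p, hp, hmin⟩ := (hKc.prod hBc).exists_isMinOn hne hcont.continuousOn
  rw [isMinOn_iff] at hmin
  refine ⟨F p, ?_, fun c hc x hx => hmin (c, x) ⟨hc, by rwa [Metric.mem_closedBall, dist_zero_right]⟩⟩
  have hFnonneg : 0 ≤ F p := Finset.sum_nonneg fun _ _ => norm_nonneg _
  rcases hFnonneg.lt_or_eq with h | h
  · exact h
  exfalso
  have hzero : ∀ f : Fin n → Fin (d+1),
      MvPolynomial.eval (gridPt d s p.2 f) (toPoly p.1) = 0 := by
    intro f
    have := (Finset.sum_eq_zero_iff_of_nonneg (fun _ _ => norm_nonneg _)).mp h.symm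
      f (Finset.mem_univ f)
    exact norm_eq_zero.mp this
  have hT : toPoly p.1 = 0 := by
    apply gridVanish n _ (fun i => Finset.image (fun k : Fin (d+1) => p.2 i + ((s * (k : ℕ) : ℝ) : ℂ)) Finset.univ)
    · intro i
      rw [Finset.card_image_of_injective _ ?_, Finset.card_univ, Fintype.card_fin]
      · exact lt_of_le_of_lt (degreeOf_toPoly p.1 i) (Nat.lt_succ_self d)
      · intro k₁ k₂ hk
        have h1 : ((s * (k₁ : ℕ) : ℝ) : ℂ) = ((s * (k₂ : ℕ) : ℝ) : ℂ) := add_left_cancel hk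
        have h2 : (s * (k₁ : ℕ) : ℝ) = (s * (k₂ : ℕ) : ℝ) := Complex.ofReal_inj.mp h1
        have h3 : ((k₁ : ℕ) : ℝ) = ((k₂ : ℕ) : ℝ) := mul_left_cancel₀ hs.ne' h2
        exact Fin.ext (Nat.cast_injective h3)
    · intro z hz
      have hfex : ∀ i, ∃ k : Fin (d+1), p.2 i + ((s * (k : ℕ) : ℝ) : ℂ) = z i := by
        intro i
        obtain ⟨k, _, hk⟩ := Finset.mem_image.mp (hz i)
        exact ⟨k, hk⟩
      choose f hf using hfex
      have : gridPt d s p.2 f = z := funext hf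
      rw [← this]
      exact hzero f
  have : (1:ℝ) = 0 := by
    have hc1 := hp.1
    rw [hK, Set.mem_setOf_eq] at hc1
    rw [← hc1]
    apply Finset.sum_eq_zero
    intro α _
    rw [← coeff_toPoly p.1 α, hT]
    simp
  norm_num at this

lemma norm_le_of_coords {n : ℕ} (y : EuclideanSpace ℂ (Fin n)) (b : ℝ) (hb : 0 ≤ b)
    (h : ∀ i, ‖y i‖ ≤ b) : ‖y‖ ≤ Real.sqrt n * b := by
  rw [EuclideanSpace.norm_eq]
  have : ∑ i : Fin n, ‖y i‖ ^ 2 ≤ ∑ _i : Fin n, b ^ 2 :=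
    Finset.sum_le_sum fun i _ => pow_le_pow_left₀ (norm_nonneg _) (h i) 2
  calc Real.sqrt (∑ i : Fin n, ‖y i‖ ^ 2) ≤ Real.sqrt (∑ _i : Fin n, b ^ 2) :=
        Real.sqrt_le_sqrt this
    _ = Real.sqrt ((n : ℝ) * b ^ 2) := by rw [Finset.sum_const, Finset.card_univ,
        Fintype.card_fin, nsmul_eq_mul]
    _ = Real.sqrt n * b := by
        rw [Real.sqrt_mul (Nat.cast_nonneg n), Real.sqrt_sq hb]

lemma cube_norm_le {n : ℕ} {v : EuclideanSpace ℂ (Fin n)} (hv : v ∈ unitCube n) :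
    ‖v‖ ≤ Real.sqrt n * 2 := by
  apply norm_le_of_coords _ _ (by norm_num)
  intro i
  obtain ⟨⟨h1, h2⟩, ⟨h3, h4⟩⟩ := hv i
  calc ‖v i‖ ≤ |(v i).re| + |(v i).im| := Complex.norm_le_abs_re_add_abs_im _
    _ ≤ 1 + 1 := add_le_add (abs_le.mpr ⟨by linarith, h2⟩) (abs_le.mpr ⟨by linarith, h4⟩)
    _ = 2 := by norm_num

lemma eval_lineRestrict {n : ℕ} (P : MvPolynomial (Fin n) ℂ) (b w : EuclideanSpace ℂ (Fin n))
    (t : ℂ) : (lineRestrict P b w).eval t = MvPolynomial.eval (fun i => b i + w i * t) P := by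
  have h := MvPolynomial.comp_aeval_apply (R := ℂ)
    (f := fun i => Polynomial.C (b i) + Polynomial.C (w i) * Polynomial.X)
    (Polynomial.aeval t : Polynomial ℂ →ₐ[ℂ] ℂ) P
  simp only [map_add, map_mul, Polynomial.aeval_C, Polynomial.aeval_X] at h
  rw [lineRestrict, ← Polynomial.coe_aeval_eq_eval, h]
  rw [show (MvPolynomial.aeval (fun i => (algebraMap ℂ ℂ) (b i) + (algebraMap ℂ ℂ) (w i) * t) :
      MvPolynomial (Fin n) ℂ →ₐ[ℂ] ℂ) = MvPolynomial.aeval (fun i => b i + w i * t) from by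
    norm_num]
  rw [MvPolynomial.aeval_def]
  rfl

lemma natDegree_lineRestrict {n : ℕ} (P : MvPolynomial (Fin n) ℂ)
    (b w : EuclideanSpace ℂ (Fin n)) : (lineRestrict P b w).natDegree ≤ P.totalDegree := by
  rw [lineRestrict, MvPolynomial.aeval_def, MvPolynomial.eval₂_eq]
  apply Polynomial.natDegree_sum_le_of_forall_le
  intro α hα
  apply Polynomial.natDegree_mul_le.trans
  have h1 : ((algebraMap ℂ (Polynomial ℂ)) (P.coeff α)).natDegree = 0 :=
    Polynomial.natDegree_C _
  rw [h1, zero_add]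
  apply (Polynomial.natDegree_prod_le _ _).trans
  calc ∑ i ∈ α.support, (((Polynomial.C (b i) + Polynomial.C (w i) * Polynomial.X)) ^ α i).natDegree
      ≤ ∑ i ∈ α.support, α i := by
        apply Finset.sum_le_sum
        intro i _
        apply Polynomial.natDegree_pow_le.trans
        have : (Polynomial.C (b i) + Polynomial.C (w i) * Polynomial.X).natDegree ≤ 1 := by
          apply (Polynomial.natDegree_add_le _ _).trans
          simp only [Polynomial.natDegree_C, max_le_iff]
          exact ⟨Nat.zero_le _, (Polynomial.natDegree_C_mul_le _ _).trans Polynomial.natDegree_X_le⟩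
        calc α i * (Polynomial.C (b i) + Polynomial.C (w i) * Polynomial.X).natDegree
            ≤ α i * 1 := Nat.mul_le_mul_left _ this
          _ = α i := Nat.mul_one _
    _ = α.sum fun _ e => e := rfl
    _ ≤ P.totalDegree := MvPolynomial.le_totalDegree hα

lemma abs_eval_le (p : Polynomial ℂ) (t : ℂ) (D : ℕ) (hD : p.natDegree ≤ D) (M : ℝ)
    (hM : 1 ≤ M) (ht : ‖t‖ ≤ M) : ‖p.eval t‖ ≤ polyNorm p * M ^ D := by
  rw [Polynomial.eval_eq_sum, Polynomial.sum_def]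
  calc ‖∑ k ∈ p.support, p.coeff k * t ^ k‖
      ≤ ∑ k ∈ p.support, ‖p.coeff k * t ^ k‖ :=
        norm_sum_le _ _
    _ ≤ ∑ k ∈ p.support, ‖p.coeff k‖ * M ^ D := by
        apply Finset.sum_le_sum
        intro k hk
        rw [norm_mul, norm_pow]
        apply mul_le_mul_of_nonneg_left _ (norm_nonneg _)
        calc ‖t‖ ^ k ≤ M ^ k := pow_le_pow_left₀ (norm_nonneg _) ht k
          _ ≤ M ^ D := pow_le_pow_right₀ hM ((Polynomial.le_natDegree_of_mem_supp k hk).trans hD)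
    _ = polyNorm p * M ^ D := by rw [polyNorm, Finset.sum_mul]

lemma exists_big {ι : Type*} [Fintype ι] [Nonempty ι] (a : ι → ℝ) (c : ℝ)
    (h : c ≤ ∑ i, a i) : ∃ i, c / (Fintype.card ι) ≤ a i := by
  by_contra hno
  push_neg at hno
  have h2 : ∑ i, a i < ∑ _i : ι, c / (Fintype.card ι) :=
    Finset.sum_lt_sum_of_nonempty Finset.univ_nonempty fun i _ => hno i
  rw [Finset.sum_const, Finset.card_univ, nsmul_eq_mul,
    mul_div_cancel₀ _ (by exact_mod_cast Fintype.card_ne_zero)] at h2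
  linarith

theorem stmt7 (n d : ℕ) (hn : 1 ≤ n) (hd : 1 ≤ d) :
    ∃ c₃ : ℝ, 0 < c₃ ∧
      ∀ P : MvPolynomial (Fin n) ℂ, P.totalDegree = d → mvNorm P = 1 →
        ∀ v₁ ∈ unitCube n,
          ∀ x : EuclideanSpace ℂ (Fin n),
            Metric.closedBall x (1 / (4 * (16 * ((d : ℝ) + n)) ^ n)) ⊆ unitCube n →
            ∃ z₁ ∈ Metric.closedBall x (1 / (4 * (16 * ((d : ℝ) + n)) ^ n)), z₁ ≠ v₁ ∧
              c₃ ≤ polyNorm (lineRestrict P v₁ ((‖z₁ - v₁‖⁻¹ : ℝ) • (z₁ - v₁))) := by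
  classical
  have hn' : (1:ℝ) ≤ n := by exact_mod_cast hn
  have hd' : (1:ℝ) ≤ d := by exact_mod_cast hd
  set ρ : ℝ := 1 / (4 * (16 * ((d : ℝ) + n)) ^ n) with hρdef
  have hbase : (1:ℝ) ≤ 16 * ((d:ℝ) + n) := by nlinarith
  have hpow : (1:ℝ) ≤ (16 * ((d:ℝ) + n)) ^ n := by
    calc (1:ℝ) = 1 ^ n := (one_pow n).symm
      _ ≤ (16 * ((d:ℝ) + n)) ^ n := pow_le_pow_left₀ (by norm_num) hbase n
  have hρpos : 0 < ρ := by
    rw [hρdef]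
    apply one_div_pos.mpr
    linarith
  have hρle : ρ ≤ 1 := by
    rw [hρdef, div_le_one (by linarith)]
    linarith
  set s : ℝ := ρ / (((d:ℝ)+1) * n) with hsdef
  have hdn1 : (1:ℝ) ≤ ((d:ℝ)+1)*n := by nlinarith
  have hspos : 0 < s := div_pos hρpos (by linarith)
  have hsρ : s * (((d:ℝ)+1)*n) = ρ := div_mul_cancel₀ _ (by linarith)
  have hsle : s ≤ ρ := by nlinarith [hspos.le]
  obtain ⟨c₀, hc₀pos, hLB⟩ := uniformLB n d s hspos (2*(n:ℝ)+1) (by positivity)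
  have hcard : ((Fintype.card (Fin n → Fin (d+1)) : ℕ) : ℝ) = ((d:ℝ)+1)^n := by
    rw [Fintype.card_fun, Fintype.card_fin, Fintype.card_fin]
    push_cast
    ring
  set c₁ : ℝ := c₀ / ((d:ℝ)+1)^n with hc₁def
  have hc₁pos : 0 < c₁ := div_pos hc₀pos (by positivity)
  refine ⟨c₁ / (4*(n:ℝ))^d, by positivity, ?_⟩
  intro P hdeg hnorm v₁ hv₁ x hball
  have hsqrtn : Real.sqrt n ≤ (n:ℝ) := by
    have h := Real.sqrt_le_sqrt (show (n:ℝ) ≤ (n:ℝ)^2 by nlinarith)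
    rwa [Real.sqrt_sq (by positivity)] at h
  have hc1 : (∑ α : coefIdx n d, ‖(fun α : coefIdx n d => P.coeff ↑α) α‖) = 1 := by
    rw [← mvNorm_eq_sum P hdeg.le]
    exact hnorm
  have hcP : toPoly (fun α : coefIdx n d => P.coeff ↑α) = P := toPoly_coeffs P hdeg.le
  have hxQ : x ∈ unitCube n := hball (Metric.mem_closedBall_self hρpos.le)
  have hxnorm : ‖x‖ ≤ 2*(n:ℝ)+1 := by
    have := cube_norm_le hxQ
    nlinarith [Real.sqrt_nonneg (n:ℝ)]
  set i₀ : Fin n := ⟨0, hn⟩ with hi₀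
  set off : EuclideanSpace ℂ (Fin n) := EuclideanSpace.single i₀ (((s/2 : ℝ)) : ℂ) with hoffdef
  have hoffnorm : ‖off‖ = s/2 := by
    rw [hoffdef, EuclideanSpace.norm_single, Complex.norm_real, Real.norm_eq_abs,
      abs_of_nonneg (by positivity)]
  have hx'norm : ‖x + off‖ ≤ 2*(n:ℝ)+1 := by
    have h1 := cube_norm_le hxQ
    calc ‖x + off‖ ≤ ‖x‖ + ‖off‖ := norm_add_le _ _
      _ ≤ Real.sqrt n * 2 + s/2 := by rw [hoffnorm]; exact add_le_add h1 le_rfl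
      _ ≤ 2*(n:ℝ)+1 := by nlinarith
  have h1 := hLB _ hc1 x hxnorm
  have h2 := hLB _ hc1 (x + off) hx'norm
  rw [hcP] at h1 h2
  obtain ⟨f, hf⟩ := exists_big _ c₀ h1
  obtain ⟨g, hg⟩ := exists_big _ c₀ h2
  rw [hcard] at hf hg
  set z : EuclideanSpace ℂ (Fin n) := (WithLp.equiv 2 (Fin n → ℂ)).symm (gridPt d s x f) with hzdef
  set z' : EuclideanSpace ℂ (Fin n) := (WithLp.equiv 2 (Fin n → ℂ)).symm (gridPt d s (x+off) g)
    with hz'def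
  have hz_i : ∀ i, z i = x i + ((s * (f i : ℕ) : ℝ) : ℂ) := fun i => rfl
  have hz'_i : ∀ i, z' i = (x + off) i + ((s * (g i : ℕ) : ℝ) : ℂ) := fun i => rfl
  have hfd : ∀ i, ((f i : ℕ) : ℝ) ≤ d := fun i => by exact_mod_cast Nat.le_of_lt_succ (f i).2
  have hgd : ∀ i, ((g i : ℕ) : ℝ) ≤ d := fun i => by exact_mod_cast Nat.le_of_lt_succ (g i).2
  have hzmem : z ∈ Metric.closedBall x ρ := by
    rw [Metric.mem_closedBall, dist_eq_norm]
    have hco : ∀ i, ‖(z - x) i‖ ≤ s * d := by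
      intro i
      rw [PiLp.sub_apply, hz_i, add_sub_cancel_left, Complex.norm_real, Real.norm_eq_abs,
        abs_of_nonneg (by positivity)]
      nlinarith [hfd i, hspos.le]
    calc ‖z - x‖ ≤ Real.sqrt n * (s * d) := norm_le_of_coords _ _ (by positivity) hco
      _ ≤ (n:ℝ) * (s * d) := mul_le_mul_of_nonneg_right hsqrtn (by positivity)
      _ ≤ ρ := by nlinarith [hspos.le]
  have hz'mem : z' ∈ Metric.closedBall x ρ := by
    rw [Metric.mem_closedBall, dist_eq_norm]
    have hco : ∀ i, ‖(z' - x) i‖ ≤ s * d + s/2 := by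
      intro i
      rw [PiLp.sub_apply, hz'_i, PiLp.add_apply]
      have : x i + off i + ((s * (g i : ℕ) : ℝ) : ℂ) - x i = off i + ((s * (g i : ℕ) : ℝ) : ℂ) := by
        ring
      rw [this]
      calc ‖off i + ((s * (g i : ℕ) : ℝ) : ℂ)‖
          ≤ ‖off i‖ + ‖((s * (g i : ℕ) : ℝ) : ℂ)‖ :=
            norm_add_le _ _
        _ ≤ s/2 + s * d := by
            apply add_le_add
            · rw [hoffdef, EuclideanSpace.single_apply]
              by_cases h : i = i₀
              · rw [if_pos h, Complex.norm_real, Real.norm_eq_abs, abs_of_nonneg (by positivity)]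
              · rw [if_neg h, norm_zero]; positivity
            · rw [Complex.norm_real, Real.norm_eq_abs, abs_of_nonneg (by positivity)]
              nlinarith [hgd i, hspos.le]
        _ = s * d + s/2 := by ring
    calc ‖z' - x‖ ≤ Real.sqrt n * (s * d + s/2) := norm_le_of_coords _ _ (by positivity) hco
      _ ≤ (n:ℝ) * (s * d + s/2) := mul_le_mul_of_nonneg_right hsqrtn (by positivity)
      _ ≤ ρ := by nlinarith [hspos.le]
  have hzz' : z ≠ z' := by
    intro hEq
    have h0 : z i₀ = z' i₀ := by rw [hEq]
    rw [hz_i, hz'_i, PiLp.add_apply] at h0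
    have hoff0 : off i₀ = ((s/2 : ℝ) : ℂ) := by
      rw [hoffdef, EuclideanSpace.single_apply, if_pos rfl]
    rw [hoff0, add_assoc, ← Complex.ofReal_add] at h0
    have hre : s * ((f i₀ : ℕ) : ℝ) = s/2 + s * ((g i₀ : ℕ) : ℝ) :=
      Complex.ofReal_inj.mp (add_left_cancel h0)
    have h2 : s * (2 * ((f i₀ : ℕ) : ℝ)) = s * (1 + 2 * ((g i₀ : ℕ) : ℝ)) := by
      linear_combination 2 * hre
    have h3 : 2 * ((f i₀ : ℕ) : ℝ) = 1 + 2 * ((g i₀ : ℕ) : ℝ) := mul_left_cancel₀ hspos.ne' h2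
    have h4 : 2 * (f i₀ : ℕ) = 1 + 2 * (g i₀ : ℕ) := by exact_mod_cast h3
    omega
  have final : ∀ z₁ : EuclideanSpace ℂ (Fin n), z₁ ∈ Metric.closedBall x ρ → z₁ ≠ v₁ →
      c₁ ≤ ‖MvPolynomial.eval (fun i => z₁ i) P‖ →
      c₁ / (4*(n:ℝ))^d ≤ polyNorm (lineRestrict P v₁ ((‖z₁ - v₁‖⁻¹ : ℝ) • (z₁ - v₁))) := by
    intro z₁ hmem hne habs
    have hz₁Q : z₁ ∈ unitCube n := hball hmem
    have hr : 0 < ‖z₁ - v₁‖ := norm_pos_iff.mpr (sub_ne_zero.mpr hne)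
    set r : ℝ := ‖z₁ - v₁‖ with hrdef
    set w : EuclideanSpace ℂ (Fin n) := (r⁻¹ : ℝ) • (z₁ - v₁) with hwdef
    have hrcne : (r : ℂ) ≠ 0 := Complex.ofReal_ne_zero.mpr hr.ne'
    have heval : (lineRestrict P v₁ w).eval (r : ℂ) = MvPolynomial.eval (fun i => z₁ i) P := by
      rw [eval_lineRestrict]
      have hfun : (fun i => v₁ i + w i * (r:ℂ)) = fun i => z₁ i := by
        funext i
        rw [hwdef, PiLp.smul_apply, PiLp.sub_apply, Complex.real_smul, Complex.ofReal_inv]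
        field_simp
        ring
      rw [hfun]
    have hrle : r ≤ 4*(n:ℝ) := by
      have ha := cube_norm_le hz₁Q
      have hb := cube_norm_le hv₁
      calc r ≤ ‖z₁‖ + ‖v₁‖ := norm_sub_le _ _
        _ ≤ Real.sqrt n * 2 + Real.sqrt n * 2 := add_le_add ha hb
        _ ≤ 4*(n:ℝ) := by nlinarith
    have h4n : (1:ℝ) ≤ 4*(n:ℝ) := by nlinarith
    have hb := abs_eval_le (lineRestrict P v₁ w) (r : ℂ) d
      ((natDegree_lineRestrict P v₁ w).trans (le_of_eq hdeg)) (4*(n:ℝ)) h4n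
      (by rw [Complex.norm_real, Real.norm_eq_abs, abs_of_nonneg hr.le]; exact hrle)
    rw [heval] at hb
    rw [div_le_iff₀ (by positivity)]
    calc c₁ ≤ ‖MvPolynomial.eval (fun i => z₁ i) P‖ := habs
      _ ≤ polyNorm (lineRestrict P v₁ w) * (4*(n:ℝ))^d := hb
  have hfz : c₁ ≤ ‖MvPolynomial.eval (fun i => z i) P‖ := hf
  have hgz : c₁ ≤ ‖MvPolynomial.eval (fun i => z' i) P‖ := hg
  by_cases hzv : z = v₁
  · refine ⟨z', hz'mem, fun h => hzz' (by rw [hzv, h]), final z' hz'mem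
      (fun h => hzz' (by rw [hzv, h])) hgz⟩
  · exact ⟨z, hzmem, hzv, final z hzmem hzv hfz⟩
end
end

section
/- Let p(t) = γ·∏_{s=1}^{d} (t − t_s) be a univariate complex polynomial of degree d ≥ 1 (γ ≠ 0), and let η = min_{1 ≤ s ≤ d} |t_s|. If η ≤ 1, then |p(0)| ≥ (1/(4(d+1)·48^d))·‖p‖·η^d. -/
set_option maxHeartbeats 800000


noncomputable section

open Polynomial Finset in
lemma polyNorm_eq_range (p : Polynomial ℂ) (N : ℕ) (h : p.natDegree < N) :
    polyNorm p = ∑ k ∈ Finset.range N, ‖p.coeff k‖ := by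
  apply Finset.sum_subset
  · intro k hk
    exact Finset.mem_range.mpr (lt_of_le_of_lt (Polynomial.le_natDegree_of_mem_supp k hk) h)
  · intro k _ hk
    simp [Polynomial.notMem_support_iff.mp hk]

lemma polyNorm_nonneg (p : Polynomial ℂ) : 0 ≤ polyNorm p :=
  Finset.sum_nonneg fun _ _ => norm_nonneg _

open Polynomial Finset in
lemma polyNorm_linear_mul (a : ℂ) (q : Polynomial ℂ) :
    polyNorm ((X - C a) * q) ≤ (1 + ‖a‖) * polyNorm q := by
  have hq : q.natDegree < q.natDegree + 1 := Nat.lt_succ_self _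
  have hpq : ((X - C a) * q).natDegree < q.natDegree + 1 + 1 := by
    have h := natDegree_mul_le (p := X - C a) (q := q)
    have h2 : (X - C a).natDegree = 1 := natDegree_X_sub_C a
    omega
  rw [polyNorm_eq_range _ _ hpq, polyNorm_eq_range q _ hq]
  have h1 : (∑ k ∈ range (q.natDegree + 1 + 1), ‖(X * q).coeff k‖)
      = ∑ k ∈ range (q.natDegree + 1), ‖q.coeff k‖ := by
    rw [Finset.sum_range_succ']
    simp [coeff_X_mul]
  have h2 : (∑ k ∈ range (q.natDegree + 1 + 1), ‖a‖ * ‖q.coeff k‖)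
      = ‖a‖ * ∑ k ∈ range (q.natDegree + 1), ‖q.coeff k‖ := by
    rw [← Finset.mul_sum, Finset.sum_range_succ, coeff_eq_zero_of_natDegree_lt hq]
    simp
  have key : ∑ k ∈ range (q.natDegree + 1 + 1), ‖((X - C a) * q).coeff k‖ ≤
      ∑ k ∈ range (q.natDegree + 1 + 1),
        (‖(X * q).coeff k‖ + ‖a‖ * ‖q.coeff k‖) := by
    apply Finset.sum_le_sum; intro k _
    have expand : ((X - C a) * q).coeff k = (X * q).coeff k - a * q.coeff k := by
      rw [sub_mul]; simp
    rw [expand]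
    generalize (X * q).coeff k = x
    generalize q.coeff k = y
    calc ‖x - a * y‖ ≤ ‖x‖ + ‖a * y‖ :=
          norm_sub_le x (a * y)
      _ = ‖x‖ + ‖a‖ * ‖y‖ := by rw [norm_mul]
  have k2 : (∑ k ∈ range (q.natDegree + 1 + 1),
        (‖(X * q).coeff k‖ + ‖a‖ * ‖q.coeff k‖))
      = (∑ k ∈ range (q.natDegree + 1 + 1), ‖(X * q).coeff k‖)
        + ∑ k ∈ range (q.natDegree + 1 + 1), ‖a‖ * ‖q.coeff k‖ :=
    Finset.sum_add_distrib
  have expandR : (1 + ‖a‖) * ∑ k ∈ range (q.natDegree + 1), ‖q.coeff k‖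
      = (∑ k ∈ range (q.natDegree + 1), ‖q.coeff k‖)
        + ‖a‖ * ∑ k ∈ range (q.natDegree + 1), ‖q.coeff k‖ := by ring
  linarith [key, k2, h1, h2, expandR]

open Polynomial Finset in
lemma polyNorm_C_abs (γ : ℂ) : polyNorm (C γ) = ‖γ‖ := by
  by_cases hγ : γ = 0 <;> simp [polyNorm, hγ, Polynomial.support_C]

open Polynomial Finset in
lemma polyNorm_prod (γ : ℂ) {d : ℕ} (t : Fin d → ℂ) (s : Finset (Fin d)) :
    polyNorm (C γ * ∏ i ∈ s, (X - C (t i)))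
      ≤ ‖γ‖ * ∏ i ∈ s, (1 + ‖t i‖) := by
  induction s using Finset.cons_induction with
  | empty => simp [polyNorm_C_abs]
  | cons a s ha ih =>
    rw [Finset.prod_cons, Finset.prod_cons, mul_left_comm]
    calc polyNorm ((X - C (t a)) * (C γ * ∏ i ∈ s, (X - C (t i))))
        ≤ (1 + ‖t a‖) * polyNorm (C γ * ∏ i ∈ s, (X - C (t i))) :=
          polyNorm_linear_mul _ _
      _ ≤ (1 + ‖t a‖) * (‖γ‖ * ∏ i ∈ s, (1 + ‖t i‖)) := by
          have : (0:ℝ) ≤ 1 + ‖t a‖ := by positivity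
          exact mul_le_mul_of_nonneg_left ih this
      _ = ‖γ‖ * ((1 + ‖t a‖) * ∏ i ∈ s, (1 + ‖t i‖)) := by
          ring

open Polynomial Finset

theorem stmt10 (d : ℕ) (hd : 1 ≤ d) (γ : ℂ) (hγ : γ ≠ 0) (t : Fin d → ℂ)
    (p : Polynomial ℂ)
    (hp : p = Polynomial.C γ * ∏ s : Fin d, (Polynomial.X - Polynomial.C (t s)))
    (η : ℝ) (hη_le : ∀ s, η ≤ ‖t s‖) (hη_mem : ∃ s, ‖t s‖ = η)
    (hη1 : η ≤ 1) :
    1 / (4 * ((d : ℝ) + 1) * 48 ^ d) * polyNorm p * η ^ d ≤ ‖p.eval 0‖ := by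
  obtain ⟨s0, hs0⟩ := hη_mem
  have hη0 : 0 ≤ η := hs0 ▸ norm_nonneg _
  set c : ℝ := 1 / (4 * ((d : ℝ) + 1) * 48 ^ d) with hc
  have hc0 : 0 ≤ c := by positivity
  have heval : ‖p.eval 0‖ = ‖γ‖ * ∏ i : Fin d, ‖t i‖ := by
    rw [hp]; simp [eval_prod, map_prod]
  have hnorm : polyNorm p ≤ ‖γ‖ * ∏ i : Fin d, (1 + ‖t i‖) := by
    rw [hp]; exact polyNorm_prod γ t Finset.univ
  have hfac : ∀ i : Fin d, η * (1 + ‖t i‖) ≤ 2 * ‖t i‖ := by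
    intro i
    rcases le_total (‖t i‖) 1 with h | h
    · have h1 : η * (1 + ‖t i‖) ≤ ‖t i‖ * 2 :=
        mul_le_mul (hη_le i) (by linarith) (by positivity) (norm_nonneg _)
      linarith
    · have h1 : η * (1 + ‖t i‖) ≤ 1 * (1 + ‖t i‖) :=
        mul_le_mul_of_nonneg_right hη1 (by positivity)
      have := norm_nonneg (t i)
      nlinarith
  have hprod : η ^ d * ∏ i : Fin d, (1 + ‖t i‖)
      ≤ 2 ^ d * ∏ i : Fin d, ‖t i‖ := by
    have l1 : η ^ d * ∏ i : Fin d, (1 + ‖t i‖)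
        = ∏ i : Fin d, (η * (1 + ‖t i‖)) := by
      rw [Finset.prod_mul_distrib, Finset.prod_const]
      simp
    have l2 : (2:ℝ) ^ d * ∏ i : Fin d, ‖t i‖
        = ∏ i : Fin d, (2 * ‖t i‖) := by
      rw [Finset.prod_mul_distrib, Finset.prod_const]
      simp
    rw [l1, l2]
    apply Finset.prod_le_prod
    · intro i _; positivity
    · intro i _; exact hfac i
  have hc2 : c * 2 ^ d ≤ 1 := by
    rw [hc]
    rw [div_mul_eq_mul_div, one_mul, div_le_one (by positivity)]
    have h48 : (2:ℝ) ^ d ≤ 48 ^ d := pow_le_pow_left₀ (by norm_num) (by norm_num) d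
    nlinarith [pow_pos (show (0:ℝ) < 48 by norm_num) d, Nat.cast_nonneg (α := ℝ) d]
  have habs0 : (0:ℝ) ≤ ‖γ‖ * ∏ i : Fin d, ‖t i‖ := by
    apply mul_nonneg (norm_nonneg _)
    exact Finset.prod_nonneg fun i _ => norm_nonneg _
  calc c * polyNorm p * η ^ d
      ≤ c * (‖γ‖ * ∏ i : Fin d, (1 + ‖t i‖)) * η ^ d := by
        apply mul_le_mul_of_nonneg_right _ (by positivity)
        exact mul_le_mul_of_nonneg_left hnorm hc0
    _ = c * ‖γ‖ * (η ^ d * ∏ i : Fin d, (1 + ‖t i‖)) := by ring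
    _ ≤ c * ‖γ‖ * (2 ^ d * ∏ i : Fin d, ‖t i‖) := by
        apply mul_le_mul_of_nonneg_left hprod
        exact mul_nonneg hc0 (norm_nonneg _)
    _ = (c * 2 ^ d) * (‖γ‖ * ∏ i : Fin d, ‖t i‖) := by ring
    _ ≤ 1 * (‖γ‖ * ∏ i : Fin d, ‖t i‖) :=
        mul_le_mul_of_nonneg_right hc2 habs0
    _ = ‖p.eval 0‖ := by rw [heval, one_mul]
end
end

section
/- Let p be a univariate complex polynomial of degree at most d, and let D be a closed disk of radius κ, 0 < κ < 1, contained in the closed unit disk D₁ (not necessarily concentric). Then max_{t ∈ D₁} |p(t)| ≤ (12/κ)^d · max_{t ∈ D} |p(t)|. -/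
open Polynomial Finset

/-- For a primitive `n`-th root of unity, the nodal polynomial of all powers is `X^n - 1`. -/
lemma nodal_primitiveRoot_eq {ζ : ℂ} {n : ℕ} (hn : 0 < n) (hζ : IsPrimitiveRoot ζ n) :
    Lagrange.nodal (range n) (fun i => ζ ^ i) = X ^ n - 1 := by
  have h : degree (1 : ℂ[X]) < degree ((X : ℂ[X]) ^ n) := by simp [hn]
  apply Polynomial.eq_of_degree_le_of_eval_index_eq (v := fun i => ζ ^ i) (range n)
    hζ.injOn_pow
  · rw [Lagrange.degree_nodal]
  · rw [Lagrange.degree_nodal, card_range,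
      degree_sub_eq_left_of_degree_lt h, degree_pow, degree_X, nsmul_eq_mul, mul_one]
  · rw [Lagrange.nodal_monic, leadingCoeff_sub_of_degree_lt h, monic_X_pow]
  · intro i _
    rw [Lagrange.eval_nodal_at_node (by assumption), eval_sub, eval_pow, eval_X, eval_one,
      ← pow_mul, mul_comm i n, pow_mul, hζ.pow_eq_one, one_pow, sub_self]

lemma prod_abs_sub_primitiveRoot {ζ : ℂ} {n : ℕ} (hn : 0 < n) (hζ : IsPrimitiveRoot ζ n)
    {j : ℕ} (hj : j ∈ range n) :
    ∏ i ∈ (range n).erase j, ‖ζ ^ j - ζ ^ i‖ = n := by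
  have h1 := Lagrange.eval_nodal_derivative_eval_node_eq
    (s := range n) (v := fun i => ζ ^ i) hj
  rw [nodal_primitiveRoot_eq hn hζ] at h1
  have habs : ‖ζ‖ = 1 := by
    exact hζ.norm'_eq_one hn.ne'
  have h2 : ‖eval (ζ ^ j) (derivative ((X : ℂ[X]) ^ n - 1))‖ = n := by
    rw [derivative_sub, derivative_one, derivative_X_pow, sub_zero]
    simp [norm_pow, habs, Complex.norm_natCast]
  rw [h1, Lagrange.eval_nodal] at h2
  rw [← h2, norm_prod]

theorem stmt11 (d : ℕ) (p : Polynomial ℂ) (hp : p.natDegree ≤ d)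
    (κ : ℝ) (hκ0 : 0 < κ) (hκ1 : κ < 1) (c : ℂ)
    (hD : Metric.closedBall c κ ⊆ Metric.closedBall (0 : ℂ) 1) :
    ∀ t ∈ Metric.closedBall (0 : ℂ) 1,
      ‖p.eval t‖ ≤
        (12 / κ) ^ d *
          sSup ((fun s => ‖p.eval s‖) '' Metric.closedBall c κ) := by
  classical
  intro t ht
  set n := d + 1 with hn
  have hn0 : 0 < n := Nat.succ_pos d
  set ζ : ℂ := Complex.exp (2 * Real.pi * Complex.I / n) with hζdef
  have hζ : IsPrimitiveRoot ζ n := Complex.isPrimitiveRoot_exp n hn0.ne'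
  have hζabs : ‖ζ‖ = 1 := by
    exact hζ.norm'_eq_one hn0.ne'
  -- the nodes
  set v : ℕ → ℂ := fun i => c + κ * ζ ^ i with hv
  have hvinj : Set.InjOn v (range n) := by
    intro a ha b hb hab
    apply hζ.injOn_pow ha hb
    have hκC : (κ : ℂ) ≠ 0 := by exact_mod_cast hκ0.ne'
    have : (κ : ℂ) * ζ ^ a = (κ : ℂ) * ζ ^ b := by
      have := hab; simpa [hv] using this
    exact mul_left_cancel₀ hκC this
  -- membership of nodes in the small disk
  have hvmem : ∀ i, v i ∈ Metric.closedBall c κ := by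
    intro i
    simp only [Metric.mem_closedBall, hv, dist_eq_norm]
    have : c + ↑κ * ζ ^ i - c = ↑κ * ζ ^ i := by ring
    rw [this]
    simp [norm_mul, norm_pow, hζabs, abs_of_pos hκ0]
  -- M is an upper bound
  set M := sSup ((fun s => ‖p.eval s‖) '' Metric.closedBall c κ) with hM
  have hbdd : BddAbove ((fun s => ‖p.eval s‖) '' Metric.closedBall c κ) :=
    (isCompact_closedBall c κ).bddAbove_image
      (continuous_norm.comp (p.continuous_aeval)).continuousOn
  have hle : ∀ s ∈ Metric.closedBall c κ, ‖p.eval s‖ ≤ M := fun s hs =>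
    le_csSup hbdd (Set.mem_image_of_mem _ hs)
  have hM0 : 0 ≤ M :=
    le_trans (norm_nonneg _) (hle c (Metric.mem_closedBall_self hκ0.le))
  -- |c| ≤ 1
  have hc1 : ‖c‖ ≤ 1 := by
    have := hD (Metric.mem_closedBall_self hκ0.le)
    simpa [Complex.dist_eq] using this
  have ht1 : ‖t‖ ≤ 1 := by simpa [Complex.dist_eq] using ht
  -- the interpolation formula
  have hdeg : p.degree < (#(range n) : WithBot ℕ) := by
    rw [card_range]
    exact lt_of_le_of_lt p.degree_le_natDegree
      (by exact_mod_cast Nat.lt_succ_of_le hp)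
  have hinterp := Lagrange.eq_interpolate hvinj hdeg
  -- numerator bound
  have hnum : ∀ i, ‖t - v i‖ ≤ 3 := by
    intro i
    have : t - v i = t - c - κ * ζ ^ i := by rw [hv]; ring
    rw [this]
    calc ‖t - c - ↑κ * ζ ^ i‖
        ≤ ‖t - c‖ + ‖↑κ * ζ ^ i‖ := by
          simpa using norm_sub_le (t - c) (↑κ * ζ ^ i)
      _ ≤ (‖t‖ + ‖c‖) + κ := by
          gcongr
          · exact (norm_sub_le t c).trans (le_refl _)
          · simp [norm_mul, norm_pow, hζabs, abs_of_pos hκ0]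
      _ ≤ 3 := by linarith
  -- denominator product
  have hden : ∀ j ∈ range n,
      ∏ i ∈ (range n).erase j, ‖v j - v i‖ = κ ^ d * n := by
    intro j hj
    have hcard : #((range n).erase j) = d := by
      rw [card_erase_of_mem hj, card_range]; omega
    have : ∀ i, v j - v i = (κ : ℂ) * (ζ ^ j - ζ ^ i) := by
      intro i; rw [hv]; ring
    calc ∏ i ∈ (range n).erase j, ‖v j - v i‖
        = ∏ i ∈ (range n).erase j, (κ * ‖ζ ^ j - ζ ^ i‖) := by
          refine Finset.prod_congr rfl fun i _ => ?_
          rw [this i, norm_mul, Complex.norm_real, Real.norm_eq_abs, abs_of_pos hκ0]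
      _ = κ ^ d * ∏ i ∈ (range n).erase j, ‖ζ ^ j - ζ ^ i‖ := by
          rw [Finset.prod_mul_distrib, Finset.prod_const, hcard]
      _ = κ ^ d * n := by rw [prod_abs_sub_primitiveRoot hn0 hζ hj]
  -- per-basis bound
  have hbasis : ∀ j ∈ range n,
      ‖(Lagrange.basis (range n) v j).eval t‖ ≤ 3 ^ d / (κ ^ d * n) := by
    intro j hj
    have hcard : #((range n).erase j) = d := by
      rw [card_erase_of_mem hj, card_range]; omega
    have heval : (Lagrange.basis (range n) v j).eval t
        = ∏ i ∈ (range n).erase j, ((v j - v i)⁻¹ * (t - v i)) := by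
      rw [Lagrange.basis, eval_prod]
      refine Finset.prod_congr rfl fun i _ => ?_
      simp [Lagrange.basisDivisor]
    rw [heval, norm_prod]
    have hposden : (0:ℝ) < κ ^ d * n := by positivity
    rw [div_eq_mul_inv, ← hden j hj, ← Finset.prod_inv_distrib, ← hcard,
      ← Finset.prod_const (3:ℝ), ← Finset.prod_mul_distrib]
    refine Finset.prod_le_prod (fun i _ => norm_nonneg _) fun i hi => ?_
    rw [norm_mul, norm_inv]
    have hne : v j ≠ v i := by
      intro h
      exact (mem_erase.mp hi).1 ((hvinj hj (mem_of_mem_erase hi) h).symm)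
    have hpos : 0 < ‖v j - v i‖ := by
      rw [norm_pos_iff, sub_ne_zero]; exact hne
    rw [mul_comm]
    gcongr
    exact hnum i
  -- main estimate
  calc ‖p.eval t‖
      = ‖(Lagrange.interpolate (range n) v fun i => p.eval (v i)).eval t‖ := by
        rw [← hinterp]
    _ = ‖∑ j ∈ range n,
          p.eval (v j) * (Lagrange.basis (range n) v j).eval t‖ := by
        rw [Lagrange.interpolate_apply, eval_finset_sum]
        simp only [eval_mul, eval_C]
    _ ≤ ∑ j ∈ range n, ‖p.eval (v j) * (Lagrange.basis (range n) v j).eval t‖ := by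
        exact norm_sum_le _ _
    _ ≤ ∑ j ∈ range n, M * (3 ^ d / (κ ^ d * n)) := by
        refine Finset.sum_le_sum fun j hj => ?_
        rw [norm_mul]
        exact mul_le_mul (hle _ (hvmem j)) (hbasis j hj) (norm_nonneg _) hM0
    _ = M * (3 / κ) ^ d := by
        rw [Finset.sum_const, card_range, nsmul_eq_mul]
        have hnne : (n:ℝ) ≠ 0 := by exact_mod_cast hn0.ne'
        have hκne : κ ≠ 0 := hκ0.ne'
        field_simp
        rw [mul_assoc M, ← mul_pow, mul_div_assoc', mul_div_cancel_left₀ (3:ℝ) hκne]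
    _ ≤ (12 / κ) ^ d * M := by
        rw [mul_comm]
        refine mul_le_mul_of_nonneg_right ?_ hM0
        exact pow_le_pow_left₀ (by positivity) ((div_le_div_iff_of_pos_right hκ0).mpr (by norm_num)) d
end

section
/- Let p be a univariate complex polynomial of degree at most d, all of whose roots have modulus at least η > 0. Then for any τ₁, τ₂ ∈ ℂ with |τ₁| ≤ η/4 and |τ₂| ≤ η/4, one has |p(τ₁)| ≤ 4^d · |p(τ₂)|. -/
open Polynomial

private lemma aux_prod_le (f g : ℂ → ℝ) (s : Multiset ℂ)
    (hf : ∀ a ∈ s, 0 ≤ f a) (hg : ∀ a ∈ s, 0 ≤ g a)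
    (h : ∀ a ∈ s, f a ≤ g a) : (s.map f).prod ≤ (s.map g).prod := by
  induction s using Multiset.induction with
  | empty => simp
  | cons a s ih =>
    simp only [Multiset.map_cons, Multiset.prod_cons]
    have hfs : (Multiset.map f s).prod ≤ (Multiset.map g s).prod :=
      ih (fun x hx => hf x (Multiset.mem_cons_of_mem hx))
        (fun x hx => hg x (Multiset.mem_cons_of_mem hx))
        (fun x hx => h x (Multiset.mem_cons_of_mem hx))
    have h0 : 0 ≤ (Multiset.map f s).prod :=
      Multiset.prod_nonneg (by
        intro x hx
        obtain ⟨y, hy, rfl⟩ := Multiset.mem_map.mp hx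
        exact hf y (Multiset.mem_cons_of_mem hy))
    exact mul_le_mul (h a (Multiset.mem_cons_self a s)) hfs h0
      (hg a (Multiset.mem_cons_self a s))

theorem stmt12 (d : ℕ) (p : Polynomial ℂ) (hp : p.natDegree ≤ d)
    (η : ℝ) (hη : 0 < η) (hroots : ∀ t : ℂ, p.eval t = 0 → η ≤ ‖t‖)
    (τ₁ τ₂ : ℂ) (h₁ : ‖τ₁‖ ≤ η / 4) (h₂ : ‖τ₂‖ ≤ η / 4) :
    ‖p.eval τ₁‖ ≤ 4 ^ d * ‖p.eval τ₂‖ := by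
  rcases eq_or_ne p 0 with rfl | hp0
  · simp
  have hfac := (IsAlgClosed.splits p).eq_prod_roots
  have heval : ∀ τ : ℂ, ‖p.eval τ‖ =
      ‖p.leadingCoeff‖ * (p.roots.map fun a => ‖τ - a‖).prod := by
    intro τ
    conv_lhs => rw [hfac]
    rw [eval_mul, eval_C, norm_mul, eval_multiset_prod, show ∀ m : Multiset ℂ, ‖m.prod‖ = (m.map norm).prod from
      fun m => map_multiset_prod (normHom (α := ℂ)) m]
    simp [Multiset.map_map, Function.comp]
  rw [heval τ₁, heval τ₂]
  have key : ∀ a ∈ p.roots, ‖τ₁ - a‖ ≤ 4 * ‖τ₂ - a‖ := by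
    intro a ha
    have haη : η ≤ ‖a‖ := hroots a ((isRoot_of_mem_roots ha))
    have t1 : ‖τ₁ - a‖ ≤ ‖τ₁‖ + ‖a‖ := by
      simpa [sub_eq_add_neg] using norm_add_le τ₁ (-a)
    have t2 : ‖a‖ - ‖τ₂‖ ≤ ‖τ₂ - a‖ := by
      calc ‖a‖ - ‖τ₂‖ ≤ ‖a - τ₂‖ := by
            simpa using norm_sub_norm_le a τ₂
        _ = ‖τ₂ - a‖ := by rw [← norm_neg, neg_sub]
    linarith
  have hprod : ((p.roots.map fun a => ‖τ₁ - a‖).prod) ≤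
      ((p.roots.map fun a => 4 * ‖τ₂ - a‖).prod) := by
    apply aux_prod_le
    · intro a _; exact norm_nonneg _
    · intro a _; positivity
    · exact key
  have hsplit : ((p.roots.map fun a => 4 * ‖τ₂ - a‖).prod) =
      4 ^ (Multiset.card p.roots) * (p.roots.map fun a => ‖τ₂ - a‖).prod := by
    rw [show (fun a => 4 * ‖τ₂ - a‖) =
        (fun a => (fun _ => (4:ℝ)) a * (fun a => ‖τ₂ - a‖) a) from rfl,
      Multiset.prod_map_mul]
    simp [Multiset.map_const', Multiset.prod_replicate]
  have hcard : Multiset.card p.roots ≤ d :=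
    le_trans (Polynomial.card_roots' p) hp
  have hpow : (4:ℝ) ^ (Multiset.card p.roots) ≤ 4 ^ d :=
    pow_le_pow_right₀ (by norm_num) hcard
  have hnn : 0 ≤ (p.roots.map fun a => ‖τ₂ - a‖).prod := by
    apply Multiset.prod_nonneg
    intro x hx
    obtain ⟨y, _, rfl⟩ := Multiset.mem_map.mp hx
    exact norm_nonneg _
  have hlc : 0 ≤ ‖p.leadingCoeff‖ := norm_nonneg _
  calc ‖p.leadingCoeff‖ * (p.roots.map fun a => ‖τ₁ - a‖).prod
      ≤ ‖p.leadingCoeff‖ *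
        (4 ^ (Multiset.card p.roots) * (p.roots.map fun a => ‖τ₂ - a‖).prod) := by
        rw [← hsplit]; exact mul_le_mul_of_nonneg_left hprod hlc
    _ ≤ ‖p.leadingCoeff‖ *
        (4 ^ d * (p.roots.map fun a => ‖τ₂ - a‖).prod) := by
        apply mul_le_mul_of_nonneg_left _ hlc
        exact mul_le_mul_of_nonneg_right hpow hnn
    _ = 4 ^ d * (‖p.leadingCoeff‖ * (p.roots.map fun a => ‖τ₂ - a‖).prod) := by
        ring
end

section
/- Let n ≥ 1, d ≥ 1. There exists a constant c > 0 depending only on n and d such that: for every normalized polynomial P of degree d in ℂⁿ with H = {z : P(z) = 0}, every δ with 0 < δ < ρ(n,d) = 1/(4(16(d+n))^n), every v₁ ∈ Q with dist(v₁, H) = δ, and every closed ball B̂ ⊆ Q of radius ρ(n,d) every point of which is at distance at least 2ρ(n,d) from H, one has 1/|P(v₁)| ≥ (c/δ)·sup_{z ∈ B̂} 1/|P(z)|. In particular, the doubling constant of the function 1/P with respect to B̂ and the region {z ∈ Q : dist(z,H) ≥ δ} is at least c/δ. -/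
noncomputable section

notation "cabs" => IsAbsoluteValue.toAbsoluteValue (norm : ℂ → ℝ)

open Polynomial in
/-- An MvPolynomial over a field vanishing on the grid {0..d}^n with degreeOf bounds is zero. -/
theorem grid_vanish (d : ℕ) : ∀ (n : ℕ) (P : MvPolynomial (Fin n) ℂ),
    (∀ i, MvPolynomial.degreeOf i P ≤ d) →
    (∀ g : Fin n → Fin (d + 1), MvPolynomial.eval (fun i => ((g i : ℕ) : ℂ)) P = 0) →
    P = 0 := by
  intro n
  induction n with
  | zero =>
    intro P _ hv
    obtain ⟨c, rfl⟩ := MvPolynomial.C_surjective (Fin 0) P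
    have := hv (fun i => i.elim0)
    simp [MvPolynomial.eval_C] at this
    rw [this]; simp
  | succ n ih =>
    intro P hdeg hv
    have key : ∀ s : Fin n → Fin (d+1), ∀ k : ℕ,
        MvPolynomial.eval (fun i => ((s i : ℕ) : ℂ))
          ((MvPolynomial.finSuccEquiv ℂ n P).coeff k) = 0 := by
      intro s k
      set q : Polynomial ℂ :=
        Polynomial.map (MvPolynomial.eval (fun i => ((s i : ℕ) : ℂ)))
          (MvPolynomial.finSuccEquiv ℂ n P) with hq
      have hqz : q = 0 := by
        apply Polynomial.eq_zero_of_natDegree_lt_card_of_eval_eq_zero q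
          (f := fun j : Fin (d+1) => ((j : ℕ) : ℂ))
        · intro a b hab
          simp only [Nat.cast_inj] at hab
          exact Fin.ext hab
        · intro j
          have h1 := hv (Fin.cons j s)
          have h2 : (fun i => ((((Fin.cons j s : Fin (n+1) → Fin (d+1)) i) : ℕ) : ℂ)) =
              Fin.cons ((j:ℕ):ℂ) (fun i => ((s i : ℕ):ℂ)) := by
            funext i
            refine Fin.cases ?_ ?_ i
            · simp
            · intro i'; simp
          rw [h2, MvPolynomial.eval_eq_eval_mv_eval'] at h1
          exact h1
        · calc q.natDegree ≤ (MvPolynomial.finSuccEquiv ℂ n P).natDegree :=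
                Polynomial.natDegree_map_le
            _ = MvPolynomial.degreeOf 0 P := MvPolynomial.natDegree_finSuccEquiv P
            _ ≤ d := hdeg 0
            _ < Fintype.card (Fin (d+1)) := by simp
      have : q.coeff k = 0 := by rw [hqz]; simp
      simpa [hq, Polynomial.coeff_map] using this
    have hc : ∀ k, (MvPolynomial.finSuccEquiv ℂ n P).coeff k = 0 := by
      intro k
      apply ih
      · intro j
        calc MvPolynomial.degreeOf j ((MvPolynomial.finSuccEquiv ℂ n P).coeff k)
            ≤ MvPolynomial.degreeOf j.succ P := MvPolynomial.degreeOf_coeff_finSuccEquiv P j k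
          _ ≤ d := hdeg j.succ
      · intro g; exact key g k
    have : MvPolynomial.finSuccEquiv ℂ n P = 0 := Polynomial.ext fun k => by simp [hc k]
    have := congrArg (MvPolynomial.finSuccEquiv ℂ n).symm this
    simpa using this

namespace Stmt16Aux

variable (n d : ℕ)

def expOf (e : Fin n → Fin (d + 1)) : Fin n →₀ ℕ :=
  Finsupp.equivFunOnFinite.symm (fun i => (e i : ℕ))

@[simp] lemma expOf_apply (e : Fin n → Fin (d + 1)) (i : Fin n) :
    expOf n d e i = (e i : ℕ) := rfl

lemma expOf_injective : Function.Injective (expOf n d) := by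
  intro a b hab
  funext i
  have : expOf n d a i = expOf n d b i := by rw [hab]
  simpa [Fin.ext_iff] using this

def evalMapFun (c : (Fin n → Fin (d + 1)) → ℂ) (g : Fin n → Fin (d + 1)) : ℂ :=
  ∑ e : Fin n → Fin (d + 1), c e * ∏ i, ((g i : ℕ) : ℂ) ^ (e i : ℕ)

def evalMap : ((Fin n → Fin (d + 1)) → ℂ) →ₗ[ℂ] ((Fin n → Fin (d + 1)) → ℂ) where
  toFun := evalMapFun n d
  map_add' c₁ c₂ := by
    funext g
    simp [evalMapFun, add_mul, Finset.sum_add_distrib]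
  map_smul' a c := by
    funext g
    simp [evalMapFun, Finset.mul_sum, mul_assoc]

lemma evalMap_eq_eval (P : MvPolynomial (Fin n) ℂ) (hdeg : ∀ i, MvPolynomial.degreeOf i P ≤ d)
    (g : Fin n → Fin (d + 1)) :
    evalMap n d (fun e => MvPolynomial.coeff (expOf n d e) P) g
      = MvPolynomial.eval (fun i => ((g i : ℕ) : ℂ)) P := by
  have hsub : P.support ⊆ Finset.univ.image (expOf n d) := by
    intro α hα
    have hle : ∀ i, α i ≤ d := by
      intro i
      exact (MvPolynomial.degreeOf_le_iff.mp (hdeg i)) α hα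
    refine Finset.mem_image.mpr ⟨fun i => ⟨α i, Nat.lt_succ_of_le (hle i)⟩, Finset.mem_univ _, ?_⟩
    ext i
    simp
  rw [MvPolynomial.eval_eq']
  show (∑ e : Fin n → Fin (d+1), MvPolynomial.coeff (expOf n d e) P *
      ∏ i, ((g i : ℕ) : ℂ) ^ (e i : ℕ)) = _
  rw [show (∑ e : Fin n → Fin (d+1), MvPolynomial.coeff (expOf n d e) P *
        ∏ i, ((g i : ℕ) : ℂ) ^ (e i : ℕ))
      = ∑ α ∈ Finset.univ.image (expOf n d),
          MvPolynomial.coeff α P * ∏ i, ((g i : ℕ) : ℂ) ^ (α i) from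
    (Finset.sum_image (s := Finset.univ) (g := expOf n d)
      (f := fun α => MvPolynomial.coeff α P * ∏ i, ((g i : ℕ) : ℂ) ^ (α i))
      (fun a _ b _ h => expOf_injective n d h)).symm]
  refine (Finset.sum_subset hsub ?_).symm
  intro α _ hα
  have : MvPolynomial.coeff α P = 0 := MvPolynomial.notMem_support_iff.mp hα
  simp [this]

lemma evalMap_injective : Function.Injective (evalMap n d) := by
  intro c₁ c₂ h
  have h0 : evalMap n d (c₁ - c₂) = 0 := by rw [map_sub, h, sub_self]
  suffices hz : c₁ - c₂ = 0 by
    funext e; have := congrFun hz e; simpa [sub_eq_zero] using this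
  set c := c₁ - c₂ with hc
  set P : MvPolynomial (Fin n) ℂ :=
    ∑ e : Fin n → Fin (d + 1), MvPolynomial.monomial (expOf n d e) (c e) with hP
  have hcoeff : ∀ e, MvPolynomial.coeff (expOf n d e) P = c e := by
    intro e
    rw [hP, MvPolynomial.coeff_sum]
    rw [Finset.sum_eq_single e]
    · simp [MvPolynomial.coeff_monomial]
    · intro b _ hb
      rw [MvPolynomial.coeff_monomial]
      rw [if_neg (fun hx => hb (expOf_injective n d hx))]
    · intro h; exact absurd (Finset.mem_univ e) h
  have hcoeff0 : ∀ α, α ∉ Finset.univ.image (expOf n d) → MvPolynomial.coeff α P = 0 := by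
    intro α hα
    rw [hP, MvPolynomial.coeff_sum]
    apply Finset.sum_eq_zero
    intro e _
    rw [MvPolynomial.coeff_monomial, if_neg]
    intro hx
    exact hα (Finset.mem_image.mpr ⟨e, Finset.mem_univ _, hx⟩)
  have hdeg : ∀ i, MvPolynomial.degreeOf i P ≤ d := by
    intro i
    rw [MvPolynomial.degreeOf_le_iff]
    intro m hm
    have hmem : m ∈ Finset.univ.image (expOf n d) := by
      by_contra hni
      exact absurd hm (MvPolynomial.notMem_support_iff.mpr (hcoeff0 m hni))
    obtain ⟨e, -, rfl⟩ := Finset.mem_image.mp hmem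
    simpa using Nat.lt_succ_iff.mp (e i).isLt
  have heval : ∀ g : Fin n → Fin (d+1), MvPolynomial.eval (fun i => ((g i : ℕ) : ℂ)) P = 0 := by
    intro g
    rw [hP]
    rw [map_sum]
    have : ∀ e : Fin n → Fin (d+1),
        MvPolynomial.eval (fun i => ((g i : ℕ) : ℂ)) (MvPolynomial.monomial (expOf n d e) (c e))
          = c e * ∏ i, ((g i : ℕ) : ℂ) ^ (e i : ℕ) := by
      intro e
      rw [MvPolynomial.eval_monomial]
      congr 1
      rw [Finsupp.prod_fintype]
      · simp
      · intro i; simp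
    rw [Finset.sum_congr rfl (fun e _ => this e)]
    exact congrFun h0 g
  have hP0 : P = 0 := grid_vanish d n P hdeg heval
  funext e
  have := hcoeff e
  rw [hP0] at this
  simpa using this.symm

theorem exists_grid_point : ∃ c₀ : ℝ, 0 < c₀ ∧
    ∀ P : MvPolynomial (Fin n) ℂ, P.totalDegree ≤ d →
      ∃ z₀ : Fin n → ℂ, (∀ i, cabs (z₀ i) ≤ d) ∧
        c₀ * mvNorm P ≤ cabs (MvPolynomial.eval z₀ P) := by
  obtain ⟨K, hK0, hKa⟩ := (evalMap n d).exists_antilipschitzWith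
    (LinearMap.ker_eq_bot.mpr (evalMap_injective n d))
  set N : ℕ := Fintype.card (Fin n → Fin (d + 1)) with hN
  have hNpos : 0 < (N : ℝ) := by
    have : 0 < N := Fintype.card_pos
    exact_mod_cast this
  refine ⟨1 / (N * K), by positivity, ?_⟩
  intro P hPd
  set c : (Fin n → Fin (d+1)) → ℂ := fun e => MvPolynomial.coeff (expOf n d e) P with hc
  have hdeg : ∀ i, MvPolynomial.degreeOf i P ≤ d := fun i =>
    le_trans (MvPolynomial.degreeOf_le_totalDegree P i) hPd
  -- mvNorm P ≤ N * ‖c‖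
  have h1 : mvNorm P ≤ N * ‖c‖ := by
    have hsub : P.support ⊆ Finset.univ.image (expOf n d) := by
      intro α hα
      have hle : ∀ i, α i ≤ d := fun i => (MvPolynomial.degreeOf_le_iff.mp (hdeg i)) α hα
      refine Finset.mem_image.mpr ⟨fun i => ⟨α i, Nat.lt_succ_of_le (hle i)⟩, Finset.mem_univ _, ?_⟩
      ext i; simp
    calc mvNorm P ≤ ∑ α ∈ Finset.univ.image (expOf n d), cabs (MvPolynomial.coeff α P) :=
          Finset.sum_le_sum_of_subset_of_nonneg hsub (fun _ _ _ => norm_nonneg _)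
      _ = ∑ e : Fin n → Fin (d+1), cabs (c e) := by
          rw [Finset.sum_image (fun a _ b _ h => expOf_injective n d h)]
      _ ≤ ∑ e : Fin n → Fin (d+1), ‖c‖ := by
          refine Finset.sum_le_sum (fun e _ => ?_)
          have := norm_le_pi_norm c e
          simpa [IsAbsoluteValue.toAbsoluteValue_apply] using this
      _ = N * ‖c‖ := by simp [hN, Finset.card_univ, mul_comm]
  -- ‖c‖ ≤ K * ‖evalMap c‖
  have h2 : ‖c‖ ≤ K * ‖evalMap n d c‖ := by
    have := hKa.le_mul_dist c 0
    simpa [dist_zero_right, map_zero] using this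
  -- pick maximizing grid point
  obtain ⟨g, -, hg⟩ := Finset.exists_max_image Finset.univ
    (fun g => cabs (evalMap n d c g)) ⟨Classical.arbitrary _, Finset.mem_univ _⟩
  have h3 : ‖evalMap n d c‖ ≤ cabs (evalMap n d c g) := by
    rw [pi_norm_le_iff_of_nonneg (AbsoluteValue.nonneg _ _)]
    intro e
    simpa [IsAbsoluteValue.toAbsoluteValue_apply] using hg e (Finset.mem_univ e)
  refine ⟨fun i => ((g i : ℕ) : ℂ), ?_, ?_⟩
  · intro i
    show ‖((g i : ℕ) : ℂ)‖ ≤ _; rw [Complex.norm_natCast]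
    exact_mod_cast Nat.lt_succ_iff.mp (g i).isLt
  · rw [← evalMap_eq_eval n d P hdeg g]
    have hchain : mvNorm P ≤ N * K * cabs (evalMap n d c g) := by
      calc mvNorm P ≤ N * ‖c‖ := h1
        _ ≤ N * (K * ‖evalMap n d c‖) := by
            exact mul_le_mul_of_nonneg_left h2 (le_of_lt hNpos)
        _ ≤ N * K * cabs (evalMap n d c g) := by
            rw [mul_assoc]
            exact mul_le_mul_of_nonneg_left
              (mul_le_mul_of_nonneg_left h3 K.2) (le_of_lt hNpos)
    have hNK : 0 < (N : ℝ) * K := by positivity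
    rw [div_mul_eq_mul_div, one_mul, div_le_iff₀ hNK]
    linarith [hchain]


lemma abs_pow_sub_pow (M δ : ℝ) (hM : 1 ≤ M) (hδ0 : 0 ≤ δ) (x y : ℂ) (hx : cabs x ≤ M)
    (hy : cabs y ≤ M) (hxy : cabs (x - y) ≤ δ) (k : ℕ) :
    cabs (x ^ k - y ^ k) ≤ k * M ^ k * δ := by
  have hM0 : (0:ℝ) ≤ M := le_trans zero_le_one hM
  induction k with
  | zero => simp
  | succ k ihk =>
    have key : x ^ (k+1) - y ^ (k+1) = x * (x ^ k - y ^ k) + (x - y) * y ^ k := by ring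
    have hyk : cabs (y ^ k) ≤ M ^ k := by
      rw [map_pow]; exact pow_le_pow_left₀ (AbsoluteValue.nonneg _ _) hy k
    calc cabs (x ^ (k+1) - y ^ (k+1))
        ≤ cabs (x * (x ^ k - y ^ k)) + cabs ((x - y) * y ^ k) := by
          rw [key]; exact AbsoluteValue.add_le _ _ _
      _ = cabs x * cabs (x ^ k - y ^ k)
            + cabs (x - y) * cabs (y ^ k) := by rw [map_mul, map_mul]
      _ ≤ M * (k * M ^ k * δ) + δ * M ^ k := by
          refine add_le_add (mul_le_mul hx ihk (AbsoluteValue.nonneg _ _) hM0)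
            (mul_le_mul hxy hyk (AbsoluteValue.nonneg _ _) hδ0)
      _ ≤ ((k:ℝ)+1) * M ^ (k+1) * δ := by
          have h1 : M ^ k ≤ M ^ (k+1) := pow_le_pow_right₀ hM (Nat.le_succ k)
          have h2 : M ^ k * δ ≤ M ^ (k+1) * δ := mul_le_mul_of_nonneg_right h1 hδ0
          have h3 : M * ((k:ℝ) * M ^ k * δ) = k * M ^ (k+1) * δ := by rw [pow_succ]; ring
          nlinarith [h2, h3]
      _ = ((k+1 : ℕ):ℝ) * M ^ (k+1) * δ := by push_cast; ring

lemma abs_monomial_sub {n : ℕ} (M δ : ℝ) (hM : 1 ≤ M) (hδ0 : 0 ≤ δ) (x y : Fin n → ℂ)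
    (hx : ∀ i, cabs (x i) ≤ M) (hy : ∀ i, cabs (y i) ≤ M)
    (hxy : ∀ i, cabs (x i - y i) ≤ δ) (α : Fin n → ℕ) (s : Finset (Fin n)) :
      cabs (∏ i ∈ s, x i ^ α i - ∏ i ∈ s, y i ^ α i)
        ≤ (∑ i ∈ s, α i) * M ^ (∑ i ∈ s, α i) * δ := by
  have hM0 : (0:ℝ) ≤ M := le_trans zero_le_one hM
  induction s using Finset.induction with
  | empty => simp
  | insert _ _ his ih =>
    rename_i i s
    rw [Finset.prod_insert his, Finset.prod_insert his, Finset.sum_insert his]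
    have hxa : cabs (x i ^ α i) ≤ M ^ α i := by
      rw [map_pow]; exact pow_le_pow_left₀ (AbsoluteValue.nonneg _ _) (hx i) _
    have hys : cabs (∏ j ∈ s, y j ^ α j) ≤ M ^ (∑ j ∈ s, α j) := by
      rw [map_prod, ← Finset.prod_pow_eq_pow_sum]
      refine Finset.prod_le_prod (fun j _ => AbsoluteValue.nonneg _ _) (fun j _ => ?_)
      rw [map_pow]; exact pow_le_pow_left₀ (AbsoluteValue.nonneg _ _) (hy j) _
    have key : x i ^ α i * ∏ j ∈ s, x j ^ α j - y i ^ α i * ∏ j ∈ s, y j ^ α j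
        = x i ^ α i * (∏ j ∈ s, x j ^ α j - ∏ j ∈ s, y j ^ α j)
          + (x i ^ α i - y i ^ α i) * ∏ j ∈ s, y j ^ α j := by ring
    calc cabs _
        ≤ cabs (x i ^ α i) * cabs (∏ j ∈ s, x j ^ α j - ∏ j ∈ s, y j ^ α j)
          + cabs (x i ^ α i - y i ^ α i) * cabs (∏ j ∈ s, y j ^ α j) := by
          rw [key, ← map_mul, ← map_mul]; exact AbsoluteValue.add_le _ _ _
      _ ≤ M ^ α i * ((∑ j ∈ s, α j) * M ^ (∑ j ∈ s, α j) * δ)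
          + (α i * M ^ α i * δ) * M ^ (∑ j ∈ s, α j) := by
          refine add_le_add (mul_le_mul hxa ih (AbsoluteValue.nonneg _ _) (pow_nonneg hM0 _))
            (mul_le_mul (abs_pow_sub_pow M δ hM hδ0 _ _ (hx i) (hy i) (hxy i) (α i)) hys
              (AbsoluteValue.nonneg _ _) (by positivity))
      _ = ((α i : ℝ) + ∑ j ∈ s, α j) * (M ^ α i * M ^ (∑ j ∈ s, α j)) * δ := by ring
      _ = ((α i + ∑ j ∈ s, α j : ℕ) : ℝ) * M ^ (α i + ∑ j ∈ s, α j) * δ := by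
          rw [← pow_add]; push_cast; ring

/-- Lipschitz-type bound for evaluation of multivariate polynomials. -/
lemma eval_sub_le {n : ℕ} (d : ℕ) (M δ : ℝ) (hM : 1 ≤ M) (hδ0 : 0 ≤ δ)
    (P : MvPolynomial (Fin n) ℂ) (hPd : P.totalDegree ≤ d)
    (x y : Fin n → ℂ)
    (hx : ∀ i, cabs (x i) ≤ M) (hy : ∀ i, cabs (y i) ≤ M)
    (hxy : ∀ i, cabs (x i - y i) ≤ δ) :
    cabs (MvPolynomial.eval x P - MvPolynomial.eval y P)
      ≤ mvNorm P * (d * M ^ d * δ) := by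
  have hM0 : (0:ℝ) ≤ M := le_trans zero_le_one hM
  rw [MvPolynomial.eval_eq', MvPolynomial.eval_eq', ← Finset.sum_sub_distrib]
  refine le_trans ((cabs).sum_le _ _) ?_
  rw [mvNorm, Finset.sum_mul]
  refine Finset.sum_le_sum (fun α hα => ?_)
  rw [show MvPolynomial.coeff α P * ∏ i, x i ^ α i - MvPolynomial.coeff α P * ∏ i, y i ^ α i
      = MvPolynomial.coeff α P * (∏ i, x i ^ α i - ∏ i, y i ^ α i) from by ring, map_mul]
  refine mul_le_mul_of_nonneg_left ?_ (AbsoluteValue.nonneg _ _)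
  have hsum : ∑ i, α i ≤ d := by
    have h1 : (α.sum fun _ e => e) ≤ P.totalDegree := MvPolynomial.le_totalDegree hα
    have h2 : (α.sum fun _ e => e) = ∑ i, α i := by
      rw [Finsupp.sum_fintype]; intro i; rfl
    omega
  calc cabs (∏ i, x i ^ α i - ∏ i, y i ^ α i)
      ≤ (∑ i, α i) * M ^ (∑ i, α i) * δ :=
        abs_monomial_sub M δ hM hδ0 x y hx hy hxy (fun i => α i) Finset.univ
    _ ≤ d * M ^ d * δ := by
        refine mul_le_mul_of_nonneg_right (mul_le_mul ?_ ?_ (by positivity) (by positivity)) hδ0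
        · exact_mod_cast hsum
        · exact pow_le_pow_right₀ hM hsum

/-- One-variable lower bound: if all roots of `q` have modulus at least `r`, then
`|q(0)| ≥ (r/2)^d |q(1)|`. -/
lemma one_var_lower (d : ℕ) (r : ℝ) (hr0 : 0 < r) (hr1 : r ≤ 1) (q : Polynomial ℂ)
    (hq : q ≠ 0) (hqd : q.natDegree ≤ d)
    (hroots : ∀ t ∈ q.roots, r ≤ cabs t) :
    (r / 2) ^ d * cabs (q.eval 1) ≤ cabs (q.eval 0) := by
  have hsplit : q = Polynomial.C q.leadingCoeff *
      (q.roots.map (fun a => Polynomial.X - Polynomial.C a)).prod :=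
    (IsAlgClosed.splits q).eq_prod_roots
  have he0 : cabs (q.eval 0) = cabs q.leadingCoeff *
      (q.roots.map (fun t => cabs t)).prod := by
    conv_lhs => rw [hsplit]
    rw [Polynomial.eval_mul, Polynomial.eval_C, map_mul, Polynomial.eval_multiset_prod]
    congr 1
    rw [Multiset.map_map, map_multiset_prod cabs, Multiset.map_map]
    apply congrArg
    apply Multiset.map_congr rfl
    intro t _
    simp
  have he1 : cabs (q.eval 1) = cabs q.leadingCoeff *
      (q.roots.map (fun t => cabs (1 - t))).prod := by
    conv_lhs => rw [hsplit]
    rw [Polynomial.eval_mul, Polynomial.eval_C, map_mul, Polynomial.eval_multiset_prod]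
    congr 1
    rw [Multiset.map_map, map_multiset_prod cabs, Multiset.map_map]
    apply congrArg
    apply Multiset.map_congr rfl
    intro t _
    simp
  -- main multiset inequality
  have hmain : ∀ m : Multiset ℂ, (∀ t ∈ m, r ≤ cabs t) →
      (r/2) ^ Multiset.card m * (m.map (fun t => cabs (1 - t))).prod
        ≤ (m.map (fun t => cabs t)).prod := by
    intro m
    induction m using Multiset.induction with
    | empty => simp
    | cons t m ih =>
      intro hmem
      have ht : r ≤ cabs t := hmem t (Multiset.mem_cons_self t m)
      have hm' := ih (fun u hu => hmem u (Multiset.mem_cons_of_mem hu))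
      rw [Multiset.map_cons, Multiset.map_cons, Multiset.prod_cons, Multiset.prod_cons,
        Multiset.card_cons]
      have hstep : (r/2) * cabs (1 - t) ≤ cabs t := by
        have h1 : cabs (1 - t) ≤ 1 + cabs t := by
          calc cabs (1 - t) ≤ cabs 1 + cabs t := by
                simpa [sub_eq_add_neg] using AbsoluteValue.add_le cabs 1 (-t)
            _ = 1 + cabs t := by simp
        have h2 : (1:ℝ) ≤ cabs t / r := (one_le_div hr0).mpr ht
        nlinarith [AbsoluteValue.nonneg cabs t]
      calc (r/2) ^ (Multiset.card m + 1) *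
            (cabs (1 - t) * (m.map (fun u => cabs (1 - u))).prod)
          = ((r/2) * cabs (1 - t)) *
            ((r/2) ^ Multiset.card m * (m.map (fun u => cabs (1 - u))).prod) := by
            rw [pow_succ]; ring
        _ ≤ cabs t * (m.map (fun u => cabs u)).prod := by
            refine mul_le_mul hstep hm' ?_ (AbsoluteValue.nonneg _ _)
            refine mul_nonneg (by positivity) (Multiset.prod_nonneg ?_)
            intro a ha
            obtain ⟨u, -, rfl⟩ := Multiset.mem_map.mp ha
            exact AbsoluteValue.nonneg _ _
  have hcard : Multiset.card q.roots ≤ d := le_trans (Polynomial.card_roots' q) hqd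
  have hpow : (r/2) ^ d ≤ (r/2) ^ Multiset.card q.roots := by
    refine pow_le_pow_of_le_one (by positivity) (by linarith) hcard
  have hm := hmain q.roots hroots
  rw [he0, he1]
  have hlc : 0 ≤ cabs q.leadingCoeff := AbsoluteValue.nonneg _ _
  calc (r/2) ^ d * (cabs q.leadingCoeff *
        (q.roots.map (fun t => cabs (1 - t))).prod)
      ≤ (r/2) ^ Multiset.card q.roots * (cabs q.leadingCoeff *
        (q.roots.map (fun t => cabs (1 - t))).prod) := by
        refine mul_le_mul_of_nonneg_right hpow ?_
        refine mul_nonneg (AbsoluteValue.nonneg _ _) (Multiset.prod_nonneg ?_)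
        intro a ha
        obtain ⟨u, -, rfl⟩ := Multiset.mem_map.mp ha
        exact AbsoluteValue.nonneg _ _
    _ = cabs q.leadingCoeff *
        ((r/2) ^ Multiset.card q.roots * (q.roots.map (fun t => cabs (1 - t))).prod) := by
        ring
    _ ≤ cabs q.leadingCoeff * (q.roots.map (fun t => cabs t)).prod :=
        mul_le_mul_of_nonneg_left hm hlc


lemma lineRestrict_eval {n : ℕ} (P : MvPolynomial (Fin n) ℂ) (b w : EuclideanSpace ℂ (Fin n))
    (t : ℂ) :
    (lineRestrict P b w).eval t = MvPolynomial.eval (fun i => b i + w i * t) P := by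
  have h := MvPolynomial.comp_aeval
    (f := fun i : Fin n => Polynomial.C (b i) + Polynomial.C (w i) * Polynomial.X)
    (φ := Polynomial.aeval t (R := ℂ))
  have h2 := congrArg (fun ψ => ψ P) h
  simp only [AlgHom.coe_comp, Function.comp_apply] at h2
  rw [lineRestrict, ← Polynomial.coe_aeval_eq_eval, h2]
  simp only [map_add, map_mul, Polynomial.aeval_C, Polynomial.aeval_X]
  rw [show (MvPolynomial.aeval fun i => (algebraMap ℂ ℂ) (b i) + (algebraMap ℂ ℂ) (w i) * t : _)
    = _ from rfl]
  simp only [Complex.coe_algebraMap, Algebra.algebraMap_self, RingHom.id_apply]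
  rw [← MvPolynomial.coe_aeval_eq_eval]
  rfl

lemma lineRestrict_natDegree_le {n : ℕ} (P : MvPolynomial (Fin n) ℂ)
    (b w : EuclideanSpace ℂ (Fin n)) :
    (lineRestrict P b w).natDegree ≤ P.totalDegree := by
  rw [lineRestrict, MvPolynomial.aeval_def, MvPolynomial.eval₂_eq']
  refine le_trans (Polynomial.natDegree_sum_le _ _) ?_
  rw [Finset.fold_max_le]
  constructor
  · exact Nat.zero_le _
  intro α hα
  refine le_trans (Polynomial.natDegree_mul_le) ?_
  have hC : (algebraMap ℂ (Polynomial ℂ) (MvPolynomial.coeff α P)).natDegree = 0 :=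
    Polynomial.natDegree_C _
  rw [hC, Nat.zero_add]
  refine le_trans (Polynomial.natDegree_prod_le _ _) ?_
  calc ∑ i, (((Polynomial.C (b i) + Polynomial.C (w i) * Polynomial.X)) ^ α i).natDegree
      ≤ ∑ i, α i := by
        refine Finset.sum_le_sum (fun i _ => ?_)
        refine le_trans (Polynomial.natDegree_pow_le) ?_
        have : (Polynomial.C (b i) + Polynomial.C (w i) * Polynomial.X).natDegree ≤ 1 := by
          refine le_trans (Polynomial.natDegree_add_le _ _) ?_
          simp only [Polynomial.natDegree_C, Nat.zero_le, max_le_iff, true_and]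
          exact le_trans (Polynomial.natDegree_mul_le) (by simp)
        calc α i * (Polynomial.C (b i) + Polynomial.C (w i) * Polynomial.X).natDegree
            ≤ α i * 1 := Nat.mul_le_mul_left _ this
          _ = α i := Nat.mul_one _
    _ ≤ P.totalDegree := by
        have h1 : (α.sum fun _ e => e) ≤ P.totalDegree := MvPolynomial.le_totalDegree hα
        have h2 : (α.sum fun _ e => e) = ∑ i, α i := by
          rw [Finsupp.sum_fintype]; intro i; rfl
        omega


lemma coord_dist_le {n : ℕ} (a b : EuclideanSpace ℂ (Fin n)) (i : Fin n) :
    dist (a i) (b i) ≤ dist a b := by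
  rw [EuclideanSpace.dist_eq]
  rw [show dist (a i) (b i) = Real.sqrt (dist (a i) (b i) ^ 2) from
    (Real.sqrt_sq dist_nonneg).symm]
  exact Real.sqrt_le_sqrt (Finset.single_le_sum (f := fun j => dist (a j) (b j) ^ 2)
    (fun j _ => sq_nonneg _) (Finset.mem_univ i))

lemma euclid_dist_le {n : ℕ} (a b : EuclideanSpace ℂ (Fin n)) (C : ℝ) (hC : 0 ≤ C)
    (h : ∀ i, dist (a i) (b i) ≤ C) : dist a b ≤ Real.sqrt n * C := by
  rw [EuclideanSpace.dist_eq]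
  have hsum : ∑ i, dist (a i) (b i) ^ 2 ≤ (n : ℝ) * C ^ 2 := by
    calc ∑ i, dist (a i) (b i) ^ 2 ≤ ∑ _i : Fin n, C ^ 2 :=
          Finset.sum_le_sum (fun i _ => by nlinarith [dist_nonneg (x := a i) (y := b i), h i])
      _ = (n : ℝ) * C ^ 2 := by simp [mul_comm]
  calc Real.sqrt (∑ i, dist (a i) (b i) ^ 2) ≤ Real.sqrt ((n:ℝ) * C ^ 2) :=
        Real.sqrt_le_sqrt hsum
    _ = Real.sqrt n * C := by
        rw [Real.sqrt_mul (Nat.cast_nonneg n), Real.sqrt_sq hC]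


end Stmt16Aux

theorem stmt16 (n d : ℕ) (hn : 1 ≤ n) (hd : 1 ≤ d) :
    ∃ c : ℝ, 0 < c ∧
      ∀ P : MvPolynomial (Fin n) ℂ, P.totalDegree = d → mvNorm P = 1 →
        ∀ δ : ℝ, 0 < δ → δ < 1 / (4 * (16 * ((d : ℝ) + n)) ^ n) →
          ∀ v₁ ∈ unitCube n, Metric.infDist v₁ (zeroSet P) = δ →
            ∀ x : EuclideanSpace ℂ (Fin n),
              Metric.closedBall x (1 / (4 * (16 * ((d : ℝ) + n)) ^ n)) ⊆ unitCube n →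
              (∀ y ∈ Metric.closedBall x (1 / (4 * (16 * ((d : ℝ) + n)) ^ n)),
                2 * (1 / (4 * (16 * ((d : ℝ) + n)) ^ n)) ≤ Metric.infDist y (zeroSet P)) →
              ∀ z ∈ Metric.closedBall x (1 / (4 * (16 * ((d : ℝ) + n)) ^ n)),
                c / δ * (1 / ‖MvPolynomial.eval (fun i => z i) P‖) ≤
                  1 / ‖MvPolynomial.eval (fun i => v₁ i) P‖ := by
  obtain ⟨c₀, hc₀, hgrid⟩ := Stmt16Aux.exists_grid_point n d
  have h1d : (1:ℝ) ≤ (d:ℝ) := by exact_mod_cast hd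
  have h1n : (1:ℝ) ≤ (n:ℝ) := by exact_mod_cast hn
  set ρ : ℝ := 1 / (4 * (16 * ((d : ℝ) + n)) ^ n) with hρdef
  have hbase : (1:ℝ) ≤ 16 * ((d:ℝ) + n) := by nlinarith
  have hbasepow : (1:ℝ) ≤ (16 * ((d:ℝ) + n)) ^ n := one_le_pow₀ hbase
  have hρpos : 0 < ρ := by
    rw [hρdef]
    exact one_div_pos.mpr (by linarith)
  have hρ4 : ρ ≤ 1/4 := by
    rw [hρdef]
    exact one_div_le_one_div_of_le (by norm_num) (by linarith)
  set R : ℝ := Real.sqrt n * ((d:ℝ) + 2) with hRdef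
  have hsqrt1 : 1 ≤ Real.sqrt n := by
    rw [show (1:ℝ) = Real.sqrt 1 from (Real.sqrt_one).symm]
    exact Real.sqrt_le_sqrt h1n
  have hR3 : 3 ≤ R := by nlinarith
  have hR0 : 0 < R := by linarith
  set r : ℝ := 2 * ρ / R with hrdef
  have hr0 : 0 < r := div_pos (by linarith) hR0
  have hr1 : r ≤ 1 := by
    rw [hrdef, div_le_one hR0]
    nlinarith
  set K₁ : ℝ := (d:ℝ) * 3 ^ d with hK₁def
  have hK₁0 : 0 < K₁ := mul_pos (by linarith) (by positivity)
  set c₁ : ℝ := (r/2)^d * c₀ with hc₁def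
  have hc₁0 : 0 < c₁ := mul_pos (pow_pos (by linarith) d) hc₀
  refine ⟨c₁ / K₁, div_pos hc₁0 hK₁0, ?_⟩
  intro P hPdeg hPnorm δ hδ0 hδρ v₁ hv₁Q hv₁d x hxQ hxH z hz
  have hδ1 : δ ≤ 1 := by linarith
  -- continuity and closedness
  have hcont : Continuous fun y : EuclideanSpace ℂ (Fin n) =>
      MvPolynomial.eval (fun i => y i) P := by
    simp only [MvPolynomial.eval_eq']
    refine continuous_finset_sum _ (fun α _ => Continuous.mul continuous_const ?_)
    exact continuous_finset_prod _ (fun i _ => ((EuclideanSpace.proj i).continuous).pow _)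
  have hclosed : IsClosed (zeroSet P) := by
    have : zeroSet P = (fun y : EuclideanSpace ℂ (Fin n) =>
        MvPolynomial.eval (fun i => y i) P) ⁻¹' {0} := rfl
    rw [this]
    exact IsClosed.preimage hcont isClosed_singleton
  have hne : (zeroSet P).Nonempty := by
    rcases Set.eq_empty_or_nonempty (zeroSet P) with h | h
    · exfalso
      rw [h, Metric.infDist_empty] at hv₁d
      linarith
    · exact h
  obtain ⟨u, huH, hudist⟩ := hclosed.exists_infDist_eq_dist hne v₁
  have hdvu : dist v₁ u = δ := by rw [← hudist, hv₁d]
  -- upper bound on |P v₁|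
  have hPu : MvPolynomial.eval (fun i => u i) P = 0 := huH
  have hv1bound : ∀ i, cabs (v₁ i) ≤ 2 := by
    intro i
    have h := hv₁Q i
    calc cabs (v₁ i) ≤ |(v₁ i).re| + |(v₁ i).im| :=
          Complex.norm_le_abs_re_add_abs_im _
      _ ≤ 2 := by
          rw [abs_of_nonneg h.1.1, abs_of_nonneg h.2.1]
          linarith [h.1.2, h.2.2]
  have hcoord : ∀ i, cabs (v₁ i - u i) ≤ δ := by
    intro i
    have h := Stmt16Aux.coord_dist_le v₁ u i
    rw [Complex.dist_eq, hdvu] at h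
    exact h
  have hv1bound3 : ∀ i, cabs (v₁ i) ≤ 3 := fun i => le_trans (hv1bound i) (by norm_num)
  have hubound : ∀ i, cabs (u i) ≤ 3 := by
    intro i
    have h1 : cabs (u i) ≤ cabs (v₁ i) + cabs (v₁ i - u i) := by
      have h2 : ‖v₁ i - (v₁ i - u i)‖ ≤ ‖v₁ i‖ + ‖v₁ i - u i‖ := norm_sub_le _ _
      have h3 : v₁ i - (v₁ i - u i) = u i := by ring
      rw [h3] at h2
      simpa [IsAbsoluteValue.toAbsoluteValue_apply] using h2
    linarith [hv1bound i, hcoord i]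
  have hPv₁ : cabs (MvPolynomial.eval (fun i => v₁ i) P) ≤ K₁ * δ := by
    have h := Stmt16Aux.eval_sub_le d 3 δ (by norm_num) (le_of_lt hδ0) P (le_of_eq hPdeg)
      (fun i => v₁ i) (fun i => u i) hv1bound3 hubound hcoord
    rw [hPu, sub_zero, hPnorm, one_mul] at h
    calc cabs (MvPolynomial.eval (fun i => v₁ i) P) ≤ (d:ℝ) * 3 ^ d * δ := h
      _ = K₁ * δ := by rw [hK₁def]
  -- lower bound on |P z|
  obtain ⟨z₀, hz₀b, hz₀v⟩ := hgrid P (le_of_eq hPdeg)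
  rw [hPnorm, mul_one] at hz₀v
  have hzQ : z ∈ unitCube n := hxQ hz
  have hzbound : ∀ i, cabs (z i) ≤ 2 := by
    intro i
    have h := hzQ i
    calc cabs (z i) ≤ |(z i).re| + |(z i).im| := Complex.norm_le_abs_re_add_abs_im _
      _ ≤ 2 := by
          rw [abs_of_nonneg h.1.1, abs_of_nonneg h.2.1]
          linarith [h.1.2, h.2.2]
  set z₀' : EuclideanSpace ℂ (Fin n) := (WithLp.equiv 2 (Fin n → ℂ)).symm z₀ with hz₀'def
  have hz₀'i : ∀ i, z₀' i = z₀ i := fun i => rfl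
  set w : EuclideanSpace ℂ (Fin n) := z₀' - z with hwdef
  have hwi : ∀ i, w i = z₀ i - z i := by
    intro i
    rw [hwdef]
    rw [show (z₀' - z) i = z₀' i - z i from rfl, hz₀'i]
  have hwnorm : ‖w‖ ≤ R := by
    rw [hwdef, ← dist_eq_norm]
    refine le_trans (Stmt16Aux.euclid_dist_le z₀' z ((d:ℝ)+2) (by linarith) ?_) ?_
    · intro i
      rw [Complex.dist_eq, hz₀'i]
      calc cabs (z₀ i - z i) ≤ cabs (z₀ i) + cabs (z i) := by
            simpa [IsAbsoluteValue.toAbsoluteValue_apply] using norm_sub_le (z₀ i) (z i)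
        _ ≤ (d:ℝ) + 2 := by linarith [hz₀b i, hzbound i]
    · rw [hRdef]
  set q : Polynomial ℂ := lineRestrict P z w with hqdef
  have hq1 : q.eval 1 = MvPolynomial.eval z₀ P := by
    rw [hqdef, Stmt16Aux.lineRestrict_eval,
      show (fun i => z i + w i * 1) = z₀ from funext fun i => by rw [hwi]; ring]
  have hq0 : q.eval 0 = MvPolynomial.eval (fun i => z i) P := by
    rw [hqdef, Stmt16Aux.lineRestrict_eval,
      show (fun i => z i + w i * 0) = (fun i => z i) from funext fun i => by ring]
  have hqne : q ≠ 0 := by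
    intro h
    have h0 : cabs (MvPolynomial.eval z₀ P) = 0 := by
      rw [← hq1, h]
      simp
    rw [h0] at hz₀v
    linarith
  have h2ρz : 2 * ρ ≤ Metric.infDist z (zeroSet P) := hxH z hz
  have hPzlow : c₁ ≤ cabs (MvPolynomial.eval (fun i => z i) P) := by
    by_cases hw0 : w = 0
    · have hzz : ∀ i, z₀ i = z i := by
        intro i
        have h := hwi i
        rw [hw0] at h
        have : (0 : EuclideanSpace ℂ (Fin n)) i = 0 := rfl
        rw [this] at h
        exact (sub_eq_zero.mp h.symm)
      rw [show (fun i => z i) = z₀ from funext fun i => (hzz i).symm]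
      have hpow1 : (r/2)^d ≤ 1 := pow_le_one₀ (by linarith) (by linarith)
      calc c₁ = (r/2)^d * c₀ := hc₁def
        _ ≤ 1 * c₀ := mul_le_mul_of_nonneg_right hpow1 (le_of_lt hc₀)
        _ = c₀ := one_mul _
        _ ≤ _ := hz₀v
    · have hroots : ∀ t ∈ q.roots, r ≤ cabs t := by
        intro t ht
        have hraw : q.eval t = 0 := (Polynomial.mem_roots'.mp ht).2
        have hpt : (z + t • w) ∈ zeroSet P := by
          show MvPolynomial.eval (fun i => (z + t • w) i) P = 0
          rw [show (fun i => (z + t • w) i) = (fun i => z i + w i * t) from funext fun i => by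
            rw [show (z + t • w) i = z i + t * w i from rfl]
            ring]
          rw [← Stmt16Aux.lineRestrict_eval]
          exact hraw
        have hd1 : Metric.infDist z (zeroSet P) ≤ dist z (z + t • w) :=
          Metric.infDist_le_dist_of_mem hpt
        have hd2 : dist z (z + t • w) = cabs t * ‖w‖ := by
          rw [dist_self_add_right, norm_smul]
          simp [IsAbsoluteValue.toAbsoluteValue_apply]
        have h3 : 2 * ρ ≤ cabs t * R := by
          calc 2 * ρ ≤ cabs t * ‖w‖ := by
                rw [← hd2]
                exact le_trans h2ρz hd1
            _ ≤ cabs t * R :=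
                mul_le_mul_of_nonneg_left hwnorm (AbsoluteValue.nonneg _ _)
        rw [hrdef, div_le_iff₀ hR0]
        linarith
      have hdq : q.natDegree ≤ d := by
        rw [hqdef]
        exact le_trans (Stmt16Aux.lineRestrict_natDegree_le P z w) (le_of_eq hPdeg)
      have hone := Stmt16Aux.one_var_lower d r hr0 hr1 q hqne hdq hroots
      rw [hq0, hq1] at hone
      calc c₁ = (r/2)^d * c₀ := hc₁def
        _ ≤ (r/2)^d * cabs (MvPolynomial.eval z₀ P) :=
            mul_le_mul_of_nonneg_left hz₀v (by positivity)
        _ ≤ _ := hone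
  -- conclusion
  have hPv₁0 : 0 < cabs (MvPolynomial.eval (fun i => v₁ i) P) := by
    rcases (AbsoluteValue.nonneg cabs _).lt_or_eq with h | h
    · exact h
    · exfalso
      have hv0 : MvPolynomial.eval (fun i => v₁ i) P = 0 := by
        have := h.symm
        exact (AbsoluteValue.eq_zero _).mp this
      have : v₁ ∈ zeroSet P := hv0
      rw [Metric.infDist_zero_of_mem this] at hv₁d
      linarith
  have hstep : 0 ≤ c₁ / K₁ / δ := le_of_lt (div_pos (div_pos hc₁0 hK₁0) hδ0)
  calc c₁ / K₁ / δ * (1 / cabs (MvPolynomial.eval (fun i => z i) P))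
      ≤ c₁ / K₁ / δ * (1 / c₁) :=
        mul_le_mul_of_nonneg_left (one_div_le_one_div_of_le hc₁0 hPzlow) hstep
    _ = 1 / (K₁ * δ) := by
        field_simp
    _ ≤ 1 / cabs (MvPolynomial.eval (fun i => v₁ i) P) :=
        one_div_le_one_div_of_le hPv₁0 hPv₁
end
end
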